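/- arXiv:1709.06802 — 3 statements merged into one kernel-verified Lean document; each statement's English description precedes it below -/
import Mathlib

section
/- Let u be a harmonic function in the upper half plane ℍ with sup_{z ∈ ℍ} Im(z) |∇u(z)| ≤ A, let M > 0, let I ⊂ ℝ be a closed interval, and let F(I) be the family of maximal dyadic subintervals I_j ⊂ I such that |u(z_{I_j}) − u(z_I)| ≥ M. Then |u(z) − u(z_I)| ≤ M + A√2 for every z ∈ Q(I) \ ∪_{I_j ∈ F(I)} Q(I_j); in particular |u(z_{I_j}) − u(z_I)| ≤ M + A√2 for every I_j ∈ F(I). -/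
open Set Metric MeasureTheory Filter Topology
open scoped ENNReal NNReal

noncomputable section

/-- The open upper half plane in `ℂ`. -/
def UHP : Set ℂ := {z : ℂ | 0 < z.im}

/-- The `α`-dimensional Hausdorff content of a set. -/
def hContent {X : Type*} [PseudoEMetricSpace X] (α : ℝ) (A : Set X) : ℝ≥0∞ :=
  ⨅ (E : ℕ → Set X) (_ : A ⊆ ⋃ n, E n), ∑' n, EMetric.diam (E n) ^ α

/-- `Ω` is a `C`-John domain with center `z₀`: every point of `Ω` can be joined to `z₀`
by a rectifiable curve in `Ω` along which the distance to the boundary dominates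
(up to the factor `C`) the length of the subcurve already traversed. -/
def IsJohnDomain (C : ℝ) (Ω : Set ℂ) (z₀ : ℂ) : Prop :=
  z₀ ∈ Ω ∧ ∀ z ∈ Ω, ∃ γ : ℝ → ℂ,
    ContinuousOn γ (Set.Icc 0 1) ∧ γ 0 = z ∧ γ 1 = z₀ ∧
    (∀ t ∈ Set.Icc (0:ℝ) 1, γ t ∈ Ω) ∧
    eVariationOn γ (Set.Icc 0 1) ≠ ⊤ ∧
    ∀ t ∈ Set.Icc (0:ℝ) 1,
      (eVariationOn γ (Set.Icc 0 t)).toReal ≤ C * infDist (γ t) (frontier Ω)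

/-- `u` is harmonic on the upper half plane: it is `C²` there and satisfies
`u_xx + u_yy = 0`. -/
def HarmonicOnH (u : ℂ → ℝ) : Prop :=
  ContDiffOn ℝ 2 u UHP ∧ ∀ z ∈ UHP,
    fderiv ℝ (fun w => fderiv ℝ u w 1) z 1 +
      fderiv ℝ (fun w => fderiv ℝ u w Complex.I) z Complex.I = 0

/-- For an interval `I = [c, d]`, the point `z_I = x_I + i |I|` where `x_I` is the center. -/
def zI (c d : ℝ) : ℂ := ((c + d) / 2 : ℝ) + (d - c) * Complex.I

/-- The square `Q(I) = {x + iy : x ∈ I, 0 < y < |I|}` over the interval `I = [c, d]`. -/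
def Qsq (c d : ℝ) : Set ℂ := {z : ℂ | z.re ∈ Set.Icc c d ∧ z.im ∈ Set.Ioo 0 (d - c)}

/-- `[c, d]` is a dyadic subinterval of `[a, b]`, i.e. obtained by repeated bisection. -/
def IsDyadicSub (a b c d : ℝ) : Prop :=
  ∃ n k : ℕ, k < 2 ^ n ∧ c = a + k * (b - a) / 2 ^ n ∧ d = a + (k + 1) * (b - a) / 2 ^ n

/-- The family `F(I)` of maximal dyadic subintervals `J` of `I = [a, b]` with
`|u(z_J) - u(z_I)| ≥ M`, encoded as pairs of endpoints. -/
def MaxF (u : ℂ → ℝ) (a b M : ℝ) : Set (ℝ × ℝ) :=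
  {p : ℝ × ℝ | IsDyadicSub a b p.1 p.2 ∧ M ≤ |u (zI p.1 p.2) - u (zI a b)| ∧
    ∀ c d : ℝ, IsDyadicSub a b c d → M ≤ |u (zI c d) - u (zI a b)| →
      Set.Icc p.1 p.2 ⊆ Set.Icc c d → c = p.1 ∧ d = p.2}

/-- The set `G(I)` of points `x` of `I = [a, b]` over whose whole vertical segment in `Q(I)`
the oscillation `|u - u(z_I)|` is at most `M + A√2`. -/
def GSet (u : ℂ → ℝ) (a b M A : ℝ) : Set ℝ :=
  {x ∈ Set.Icc a b | ∀ y : ℝ, 0 < y → y < b - a →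
    |u ((x : ℂ) + y * Complex.I) - u (zI a b)| ≤ M + A * Real.sqrt 2}

/-- The sawtooth region `S(E)` over `E ⊆ (x₀ - y₀/2, x₀ + y₀/2)`. -/
def Sawtooth (E : Set ℝ) (x₀ y₀ : ℝ) : Set ℂ :=
  {z : ℂ | z.re ∈ Set.Ioo (x₀ - y₀ / 2) (x₀ + y₀ / 2) ∧ 0 < z.im ∧
    infDist z.re E ≤ z.im ∧ z.im < y₀}

/-! ### Auxiliary lemmas -/

lemma UHP_open : IsOpen UHP := isOpen_lt continuous_const Complex.continuous_im

lemma osc_bound (u : ℂ → ℝ) (A : ℝ) (hu : ContDiffOn ℝ 2 u UHP)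
    (hb : ∀ z ∈ UHP, z.im * ‖fderiv ℝ u z‖ ≤ A) (z w : ℂ)
    (hz : 0 < z.im) (hw : 0 < w.im) :
    |u z - u w| ≤ A / min z.im w.im * ‖z - w‖ := by
  set m := min z.im w.im with hm
  have hm0 : 0 < m := lt_min hz hw
  set S : Set ℂ := {v : ℂ | m ≤ v.im} with hS
  have hconv : Convex ℝ S := by
    have : S = Complex.imLm ⁻¹' Ici m := rfl
    rw [this]
    exact (convex_Ici m).linear_preimage _
  have hsub : S ⊆ UHP := fun v hv => lt_of_lt_of_le hm0 hv
  have hdiff : ∀ v ∈ S, DifferentiableAt ℝ u v := fun v hv =>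
    (hu.differentiableOn (by norm_num)).differentiableAt (UHP_open.mem_nhds (hsub hv))
  have hbound : ∀ v ∈ S, ‖fderiv ℝ u v‖ ≤ A / m := by
    intro v hv
    have h1 := hb v (hsub hv)
    have h2 : 0 < v.im := hsub hv
    rw [le_div_iff₀ hm0]
    calc ‖fderiv ℝ u v‖ * m ≤ ‖fderiv ℝ u v‖ * v.im :=
          mul_le_mul_of_nonneg_left hv (norm_nonneg _)
      _ ≤ A := by linarith [h1]
  have := hconv.norm_image_sub_le_of_norm_fderiv_le hdiff hbound
    (by simp only [hS, mem_setOf_eq]; exact min_le_right _ _)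
    (by simp only [hS, mem_setOf_eq]; exact min_le_left _ _)
  simpa [Real.norm_eq_abs] using this

lemma frac_le_iff {a b : ℝ} (hab : a < b) (p q : ℝ) (m n : ℕ) :
    a + p*(b-a)/2^m ≤ a + q*(b-a)/2^n ↔ p * 2^n ≤ q * 2^m := by
  have hba : (0:ℝ) < b - a := by linarith
  rw [add_le_add_iff_left, div_le_div_iff₀ (by positivity) (by positivity)]
  constructor
  · intro h
    have h' : p * 2^n * (b-a) ≤ q * 2^m * (b-a) := by nlinarith
    exact le_of_mul_le_mul_right h' hba
  · intro h
    nlinarith [mul_le_mul_of_nonneg_right h hba.le]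

lemma frac_le_pt {a b : ℝ} (hab : a < b) (p x : ℝ) (n : ℕ) :
    a + p*(b-a)/2^n ≤ x ↔ p ≤ (x-a)*2^n/(b-a) := by
  have hba : (0:ℝ) < b - a := by linarith
  have h2 : (0:ℝ) < (2:ℝ)^n := by positivity
  constructor
  · intro h
    rw [le_div_iff₀ hba]
    have := (div_le_iff₀ h2).mp (by linarith : p*(b-a)/2^n ≤ x - a)
    linarith
  · intro h
    have h' : p*(b-a) ≤ (x-a)*2^n := (le_div_iff₀ hba).mp h
    have : p*(b-a)/2^n ≤ x - a := (div_le_iff₀ h2).mpr (by linarith)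
    linarith

lemma pt_le_frac {a b : ℝ} (hab : a < b) (p x : ℝ) (n : ℕ) :
    x ≤ a + p*(b-a)/2^n ↔ (x-a)*2^n/(b-a) ≤ p := by
  have hba : (0:ℝ) < b - a := by linarith
  have h2 : (0:ℝ) < (2:ℝ)^n := by positivity
  constructor
  · intro h
    rw [div_le_iff₀ hba]
    have := (le_div_iff₀ h2).mp (by linarith : x - a ≤ p*(b-a)/2^n)
    linarith
  · intro h
    have h' : (x-a)*2^n ≤ p*(b-a) := (div_le_iff₀ hba).mp h
    have : x - a ≤ p*(b-a)/2^n := (le_div_iff₀ h2).mpr (by linarith)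
    linarith

lemma cover_lemma {a b x : ℝ} (hab : a < b) (hx : x ∈ Set.Icc a b) (n : ℕ) :
    ∃ k : ℕ, k < 2^n ∧ a + (k:ℝ)*(b-a)/2^n ≤ x ∧ x ≤ a + ((k:ℝ)+1)*(b-a)/2^n := by
  have hba : (0:ℝ) < b - a := by linarith
  have h2 : (0:ℝ) < (2:ℝ)^n := by positivity
  have h2n : (0:ℕ) < 2^n := Nat.pow_pos (by norm_num)
  set t : ℝ := (x - a) * 2^n / (b - a) with ht
  have ht0 : 0 ≤ t := by
    apply div_nonneg _ hba.le
    have : 0 ≤ x - a := by linarith [hx.1]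
    positivity
  have htb : t ≤ 2^n := by
    rw [ht, div_le_iff₀ hba]
    have : x - a ≤ b - a := by linarith [hx.2]
    nlinarith
  have hfl : (0:ℤ) ≤ ⌊t⌋ := Int.le_floor.mpr (by exact_mod_cast ht0)
  refine ⟨min (⌊t⌋.toNat) (2^n - 1), ?_, ?_, ?_⟩
  · have : min (⌊t⌋.toNat) (2^n - 1) ≤ 2^n - 1 := min_le_right _ _
    omega
  · rw [frac_le_pt hab]
    have h1 : ((min (⌊t⌋.toNat) (2^n - 1) : ℕ) : ℝ) ≤ ((⌊t⌋.toNat : ℕ) : ℝ) :=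
      Nat.cast_le.mpr (min_le_left _ _)
    have h2' : ((⌊t⌋.toNat : ℕ) : ℝ) = (⌊t⌋ : ℝ) := by exact_mod_cast Int.toNat_of_nonneg hfl
    have := Int.floor_le t
    linarith
  · rw [pt_le_frac hab]
    rcases le_total (⌊t⌋.toNat) (2^n - 1) with hc | hc
    · rw [min_eq_left hc]
      have h2' : ((⌊t⌋.toNat : ℕ) : ℝ) = (⌊t⌋ : ℝ) := by exact_mod_cast Int.toNat_of_nonneg hfl
      have := Int.lt_floor_add_one t
      linarith
    · rw [min_eq_right hc]
      have : ((2^n - 1 : ℕ) : ℝ) = 2^n - 1 := by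
        push_cast [Nat.cast_sub (by omega : 1 ≤ 2^n)]
        norm_num
      rw [this]
      linarith

lemma center_sub {a b : ℝ} (hab : a < b) {n k m j : ℕ} (hmn : m < n)
    (h1 : a + (j:ℝ)*(b-a)/2^m ≤ a + ((2*k+1 : ℕ):ℝ)*(b-a)/2^(n+1))
    (h2 : a + ((2*k+1 : ℕ):ℝ)*(b-a)/2^(n+1) ≤ a + ((j:ℝ)+1)*(b-a)/2^m) :
    a + (j:ℝ)*(b-a)/2^m ≤ a + (k:ℝ)*(b-a)/2^n ∧
      a + ((k:ℝ)+1)*(b-a)/2^n ≤ a + ((j:ℝ)+1)*(b-a)/2^m := by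
  obtain ⟨e, rfl⟩ : ∃ e, n = m + e + 1 := ⟨n - m - 1, by omega⟩
  have h1' : (j:ℝ) * 2^(m+e+1+1) ≤ ((2*k+1:ℕ):ℝ) * 2^m := (frac_le_iff hab _ _ _ _).mp h1
  have h2' : ((2*k+1:ℕ):ℝ) * 2^m ≤ ((j:ℝ)+1) * 2^(m+e+1+1) := (frac_le_iff hab _ _ _ _).mp h2
  have h1n : j * 2^(m+e+1+1) ≤ (2*k+1) * 2^m := by exact_mod_cast h1'
  have h2n : (2*k+1) * 2^m ≤ (j+1) * 2^(m+e+1+1) := by exact_mod_cast h2'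
  have key1 : j * 2^(e+1) ≤ k := by
    have e1 : j * 2^(m+e+1+1) = (j * 2^(e+1) * 2) * 2^m := by ring
    rw [e1] at h1n
    have := Nat.le_of_mul_le_mul_right h1n (Nat.pow_pos (by norm_num))
    omega
  have key2 : k + 1 ≤ (j+1) * 2^(e+1) := by
    have e1 : (j+1) * 2^(m+e+1+1) = ((j+1) * 2^(e+1) * 2) * 2^m := by ring
    rw [e1] at h2n
    have := Nat.le_of_mul_le_mul_right h2n (Nat.pow_pos (by norm_num))
    omega
  constructor
  · rw [frac_le_iff hab]
    have h : j * 2^(m+e+1) ≤ k * 2^m :=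
      calc j * 2^(m+e+1) = (j * 2^(e+1)) * 2^m := by ring
        _ ≤ k * 2^m := Nat.mul_le_mul_right _ key1
    exact_mod_cast h
  · rw [frac_le_iff hab]
    have h : (k+1) * 2^m ≤ (j+1) * 2^(m+e+1) :=
      calc (k+1) * 2^m ≤ ((j+1) * 2^(e+1)) * 2^m := Nat.mul_le_mul_right _ key2
        _ = (j+1) * 2^(m+e+1) := by ring
    exact_mod_cast h

/-- Basic facts about a dyadic subinterval at level `n`, index `k`. -/
lemma dyadic_facts {a b : ℝ} (hab : a < b) {n k : ℕ} (hk : k < 2^n) :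
    a ≤ a + (k:ℝ)*(b-a)/2^n ∧ a + ((k:ℝ)+1)*(b-a)/2^n ≤ b ∧
      (a + ((k:ℝ)+1)*(b-a)/2^n) - (a + (k:ℝ)*(b-a)/2^n) = (b-a)/2^n := by
  have hba : (0:ℝ) < b - a := by linarith
  have h2 : (0:ℝ) < (2:ℝ)^n := by positivity
  refine ⟨by linarith [(by positivity : (0:ℝ) ≤ (k:ℝ)*(b-a)/2^n)], ?_, by ring⟩
  have hk' : ((k:ℝ)+1) ≤ 2^n := by exact_mod_cast Nat.succ_le_of_lt hk
  rw [← sub_nonneg]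
  have : b - (a + ((k:ℝ)+1)*(b-a)/2^n) = (2^n - ((k:ℝ)+1)) * (b-a) / 2^n := by
    field_simp
    ring
  rw [this]
  have h0 : (0:ℝ) ≤ 2^n - ((k:ℝ)+1) := by linarith
  exact div_nonneg (mul_nonneg h0 hba.le) h2.le

/-- Every dyadic interval satisfying the `M`-condition is contained in a maximal one. -/
lemma exists_maximal (u : ℂ → ℝ) (a b M : ℝ) (hab : a < b) :
    ∀ n : ℕ, ∀ c d : ℝ,
      (∃ k : ℕ, k < 2^n ∧ c = a + k * (b-a) / 2^n ∧ d = a + (k+1) * (b-a) / 2^n) →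
      M ≤ |u (zI c d) - u (zI a b)| →
      ∃ p ∈ MaxF u a b M, Set.Icc c d ⊆ Set.Icc p.1 p.2 := by
  have hba : (0:ℝ) < b - a := by linarith
  intro n
  induction n using Nat.strong_induction_on with
  | _ n ih =>
    intro c d hcd hM'
    obtain ⟨k, hk, hc, hd⟩ := hcd
    have hlen : d - c = (b-a)/2^n := by rw [hc, hd]; push_cast; ring
    have hcd' : c < d := by
      have : (0:ℝ) < (b-a)/2^n := by positivity
      linarith
    by_cases hmax : ∀ c' d' : ℝ, IsDyadicSub a b c' d' → M ≤ |u (zI c' d') - u (zI a b)| →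
        Set.Icc c d ⊆ Set.Icc c' d' → c' = c ∧ d' = d
    · exact ⟨(c, d), ⟨⟨n, k, hk, hc, hd⟩, hM', hmax⟩, subset_rfl⟩
    · push_neg at hmax
      obtain ⟨c', d', hdy', hM'', hsub', hne⟩ := hmax
      obtain ⟨m, j, hj, hc', hd'⟩ := hdy'
      have hlen' : d' - c' = (b-a)/2^m := by rw [hc', hd']; push_cast; ring
      have hii := (Set.Icc_subset_Icc_iff hcd'.le).mp hsub'
      have hle : (b-a)/2^n ≤ (b-a)/2^m := by
        rw [← hlen, ← hlen']; linarith [hii.1, hii.2]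
      have hmn : m ≤ n := by
        have h1 : (2:ℝ)^m ≤ 2^n := by
          rw [div_le_div_iff₀ (by positivity) (by positivity)] at hle
          have := le_of_mul_le_mul_left (by nlinarith : (b-a) * (2:ℝ)^m ≤ (b-a) * 2^n) hba
          exact this
        have : (2:ℕ)^m ≤ 2^n := by exact_mod_cast h1
        exact (Nat.pow_le_pow_iff_right (by norm_num)).mp this
      rcases eq_or_lt_of_le hmn with heq | hlt
      · exfalso
        subst heq
        have : c' = c ∧ d' = d := by
          constructor <;> [skip; skip] <;> rw [← hlen'] at hlen <;> linarith [hii.1, hii.2]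
        exact hne this.1 this.2
      · obtain ⟨p, hp, hsub''⟩ := ih m hlt c' d' ⟨j, hj, hc', hd'⟩ hM''
        exact ⟨p, hp, hsub'.trans hsub''⟩

lemma part1_lemma (u : ℂ → ℝ) (A M : ℝ) (hM : 0 < M)
    (hh : HarmonicOnH u) (hb : ∀ z ∈ UHP, z.im * ‖fderiv ℝ u z‖ ≤ A)
    (a b : ℝ) (hab : a < b) :
    ∀ z ∈ Qsq a b \ ⋃ p ∈ MaxF u a b M, Qsq p.1 p.2,
      |u z - u (zI a b)| ≤ M + A * Real.sqrt 2 := by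
  have hba : (0:ℝ) < b - a := by linarith
  have hA : 0 ≤ A := by
    have hI : Complex.I ∈ UHP := by simp [UHP]
    have := hb Complex.I hI
    simp only [Complex.I_im, one_mul] at this
    exact le_trans (norm_nonneg _) this
  have hs2 : (0:ℝ) ≤ Real.sqrt 2 := Real.sqrt_nonneg 2
  intro z hz
  obtain ⟨hzQ, hzU⟩ := hz
  obtain ⟨hre, him⟩ := hzQ
  have hy0 : 0 < z.im := him.1
  have hyb : z.im < b - a := him.2
  -- choose the scale n
  obtain ⟨n, hn1, hn2⟩ : ∃ n : ℕ, (b-a)/2^(n+1) ≤ z.im ∧ z.im < (b-a)/2^n := by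
    have hex : ∃ n : ℕ, (b-a)/2^(n+1) ≤ z.im := by
      obtain ⟨n, hn⟩ := pow_unbounded_of_one_lt ((b-a)/z.im) (by norm_num : (1:ℝ) < 2)
      refine ⟨n, le_of_lt ?_⟩
      have h1 : (b-a) < z.im * 2^n := by
        have := (div_lt_iff₀ hy0).mp hn
        linarith
      have h2 : (b-a)/2^n < z.im := by
        rw [div_lt_iff₀ (by positivity)]
        linarith
      have h3 : (b-a)/2^(n+1) ≤ (b-a)/2^n := by
        apply div_le_div_of_nonneg_left hba.le (by positivity)
        exact pow_le_pow_right₀ (by norm_num) (by omega)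
      linarith
    refine ⟨Nat.find hex, Nat.find_spec hex, ?_⟩
    rcases Nat.eq_zero_or_pos (Nat.find hex) with h0 | hpos
    · rw [h0]; simpa using hyb
    · have hmin := Nat.find_min hex (show Nat.find hex - 1 < Nat.find hex by omega)
      push_neg at hmin
      rwa [Nat.sub_add_cancel hpos] at hmin
  obtain ⟨k, hk, hcx, hxd⟩ := cover_lemma hab hre n
  obtain ⟨c, d, hc, hd⟩ : ∃ c d : ℝ, c = a + (k:ℝ)*(b-a)/2^n ∧
      d = a + ((k:ℝ)+1)*(b-a)/2^n := ⟨_, _, rfl, rfl⟩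
  rw [← hc] at hcx
  rw [← hd] at hxd
  have hlen : d - c = (b-a)/2^n := by rw [hc, hd]; ring
  have hac : a ≤ c := hc ▸ (dyadic_facts hab hk).1
  have hdb : d ≤ b := hd ▸ (dyadic_facts hab hk).2.1
  have hcd : c < d := by
    have h0 : (0:ℝ) < (b-a)/2^n := by positivity
    linarith
  have hylt : z.im < d - c := by rw [hlen]; exact hn2
  have hyc : (d - c)/2 ≤ z.im := by
    have he : (b-a)/2^(n+1) = (d-c)/2 := by rw [hlen, pow_succ]; ring
    linarith [hn1, he ▸ hn1]
  -- the chosen dyadic interval cannot satisfy the M-condition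
  have hMlt : |u (zI c d) - u (zI a b)| < M := by
    by_contra hcon
    push_neg at hcon
    obtain ⟨p, hp, hsub⟩ := exists_maximal u a b M hab n c d ⟨k, hk, hc, hd⟩ hcon
    apply hzU
    have hii := (Set.Icc_subset_Icc_iff hcd.le).mp hsub
    refine Set.mem_biUnion hp ?_
    exact ⟨⟨le_trans hii.1 hcx, le_trans hxd hii.2⟩, hy0, by linarith [hii.1, hii.2]⟩
  -- gradient estimate between z and zI c d
  have hzIim : (zI c d).im = d - c := by simp [zI]
  have hzIre : (zI c d).re = (c+d)/2 := by simp [zI]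
  have hb1 := osc_bound u A hh.1 hb z (zI c d) hy0 (by rw [hzIim]; linarith)
  rw [show min z.im (zI c d).im = z.im by rw [hzIim]; exact min_eq_left hylt.le] at hb1
  have hre2 : |(z - zI c d).re| ≤ (d-c)/2 := by
    rw [Complex.sub_re, hzIre, abs_le]
    constructor <;> linarith [hcx, hxd]
  have him2 : |(z - zI c d).im| ≤ (d-c)/2 := by
    rw [Complex.sub_im, hzIim, abs_le]
    constructor <;> linarith
  have hnorm : ‖z - zI c d‖ ≤ Real.sqrt 2 * ((d-c)/2) := by
    have h1 : ‖z - zI c d‖ = Real.sqrt ((z - zI c d).re^2 + (z - zI c d).im^2) := by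
      rw [Complex.norm_def, Complex.normSq_apply]
      ring_nf
    rw [h1]
    have h2 : (z - zI c d).re^2 + (z - zI c d).im^2 ≤ 2 * ((d-c)/2)^2 := by
      nlinarith [sq_abs ((z - zI c d).re), sq_abs ((z - zI c d).im),
        abs_nonneg ((z - zI c d).re), abs_nonneg ((z - zI c d).im), hre2, him2]
    calc Real.sqrt ((z - zI c d).re^2 + (z - zI c d).im^2)
        ≤ Real.sqrt (2 * ((d-c)/2)^2) := Real.sqrt_le_sqrt h2
      _ = Real.sqrt 2 * ((d-c)/2) := by
          rw [Real.sqrt_mul (by norm_num), Real.sqrt_sq (by linarith)]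
  have hfinal : A / z.im * ‖z - zI c d‖ ≤ A * Real.sqrt 2 := by
    have hAy : A / z.im * ‖z - zI c d‖ ≤ A / z.im * (Real.sqrt 2 * ((d-c)/2)) :=
      mul_le_mul_of_nonneg_left hnorm (by positivity)
    have h2 : A / z.im * (Real.sqrt 2 * ((d-c)/2)) ≤ A * Real.sqrt 2 := by
      rw [div_mul_eq_mul_div, div_le_iff₀ hy0]
      nlinarith [mul_nonneg (mul_nonneg hA hs2) (show (0:ℝ) ≤ z.im - (d-c)/2 by linarith)]
    linarith
  have htri := abs_sub_le (u z) (u (zI c d)) (u (zI a b))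
  linarith [hb1, hfinal, hMlt.le, htri]


/-- outside the squares over the maximal dyadic subintervals where
`|u(z_J) - u(z_I)| ≥ M`, the oscillation of `u` is at most `M + A√2`; in particular this
bound holds at the points `z_{I_j}`. -/
theorem maximal_family_oscillation (u : ℂ → ℝ) (A M : ℝ) (hM : 0 < M)
    (hh : HarmonicOnH u) (hb : ∀ z ∈ UHP, z.im * ‖fderiv ℝ u z‖ ≤ A)
    (a b : ℝ) (hab : a < b) :
    (∀ z ∈ Qsq a b \ ⋃ p ∈ MaxF u a b M, Qsq p.1 p.2,
        |u z - u (zI a b)| ≤ M + A * Real.sqrt 2) ∧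
    ∀ p ∈ MaxF u a b M, |u (zI p.1 p.2) - u (zI a b)| ≤ M + A * Real.sqrt 2 := by
  have hba : (0:ℝ) < b - a := by linarith
  have hA : 0 ≤ A := by
    have hI : Complex.I ∈ UHP := by simp [UHP]
    have := hb Complex.I hI
    simp only [Complex.I_im, one_mul] at this
    exact le_trans (norm_nonneg _) this
  have hs2 : (0:ℝ) ≤ Real.sqrt 2 := Real.sqrt_nonneg 2
  have part1 := part1_lemma u A M hM hh hb a b hab
  refine ⟨part1, ?_⟩
  intro p hp
  obtain ⟨hdy, hM', hmaxp⟩ := hp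
  obtain ⟨n, k, hk, hc, hd⟩ := hdy
  have hn0 : 1 ≤ n := by
    by_contra h0
    have hn' : n = 0 := by omega
    subst hn'
    have hk0 : k = 0 := by omega
    subst hk0
    have hc0 : p.1 = a := by rw [hc]; norm_num
    have hd0 : p.2 = b := by rw [hd]; push_cast; ring_nf
    rw [hc0, hd0, sub_self, abs_zero] at hM'
    linarith
  have hlen : p.2 - p.1 = (b-a)/2^n := by rw [hc, hd]; push_cast; ring
  have hlenpos : (0:ℝ) < (b-a)/2^n := by positivity
  have hfacts := dyadic_facts hab hk
  have hap : a ≤ p.1 := by rw [hc]; exact hfacts.1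
  have hpb : p.2 ≤ b := by rw [hd]; exact hfacts.2.1
  have hpp : p.1 < p.2 := by linarith [hlen ▸ hlenpos]
  have hzre : (zI p.1 p.2).re = (p.1 + p.2)/2 := by simp [zI]
  have hzim : (zI p.1 p.2).im = p.2 - p.1 := by simp [zI]
  apply part1
  constructor
  · refine ⟨⟨?_, ?_⟩, ?_, ?_⟩
    · rw [hzre]; linarith
    · rw [hzre]; linarith
    · rw [hzim]; linarith
    · rw [hzim, hlen]
      have h2 : (2:ℝ) ≤ 2^n := by
        calc (2:ℝ) = 2^1 := by norm_num
          _ ≤ 2^n := pow_le_pow_right₀ (by norm_num) hn0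
      rw [div_lt_iff₀ (by positivity)]
      nlinarith
  · intro hmem
    obtain ⟨q, hq, hzq⟩ := Set.mem_iUnion₂.mp hmem
    obtain ⟨hre', him'⟩ := hzq
    obtain ⟨⟨m, j, hj, hqc, hqd⟩, hMq, hmaxq⟩ := hq
    have hlenq : q.2 - q.1 = (b-a)/2^m := by rw [hqc, hqd]; push_cast; ring
    have hlt : p.2 - p.1 < q.2 - q.1 := by rw [hzim] at him'; exact him'.2
    have hmn : m < n := by
      have h1 : (b-a)/2^n < (b-a)/2^m := by rw [← hlen, ← hlenq]; exact hlt
      have h2 : (2:ℝ)^m < 2^n := by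
        rw [div_lt_div_iff₀ (by positivity) (by positivity)] at h1
        have := lt_of_mul_lt_mul_left (by nlinarith : (b-a) * (2:ℝ)^m < (b-a) * 2^n) hba.le
        exact this
      have h3 : (2:ℕ)^m < 2^n := by exact_mod_cast h2
      exact (Nat.pow_lt_pow_iff_right (by norm_num)).mp h3
    have hcenter : (zI p.1 p.2).re = a + ((2*k+1 : ℕ):ℝ)*(b-a)/2^(n+1) := by
      rw [hzre, hc, hd]; push_cast; ring
    have h1 : a + (j:ℝ)*(b-a)/2^m ≤ a + ((2*k+1 : ℕ):ℝ)*(b-a)/2^(n+1) := by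
      rw [← hcenter, ← hqc]; exact hre'.1
    have h2 : a + ((2*k+1 : ℕ):ℝ)*(b-a)/2^(n+1) ≤ a + ((j:ℝ)+1)*(b-a)/2^m := by
      rw [← hcenter, ← hqd]; exact hre'.2
    obtain ⟨hqp1, hqp2⟩ := center_sub hab hmn h1 h2
    have hsub : Set.Icc p.1 p.2 ⊆ Set.Icc q.1 q.2 := by
      apply Set.Icc_subset_Icc
      · rw [hqc, hc]; exact hqp1
      · rw [hqd, hd]; exact hqp2
    obtain ⟨he1, he2⟩ := hmaxp q.1 q.2 ⟨m, j, hj, hqc, hqd⟩ hMq hsub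
    rw [he1, he2] at hlt
    linarith
end
end

section
/- Let 0 < α < 1, let f : ℍ → ℂ be a conformal (univalent analytic) map of the upper half plane, let z₀ = x₀ + i y₀ ∈ ℍ, let E ⊂ (x₀ − y₀/2, x₀ + y₀/2) be a nonempty compact set, and suppose that (1/C(α)) |f'(z₀)| ≤ |f'(w)| ≤ C(α) |f'(z₀)| for every w in the sawtooth region S(E) := { x + iy : x ∈ (x₀ − y₀/2, x₀ + y₀/2), dist(x, E) ≤ y < y₀ }, where C(α) ≥ 1 depends only on α. Then f extends continuously to S(E) ∪ E, and the image f(E) of E under this extension satisfies H^α_∞(f(E)) ≥ c(α) |f'(z₀)|^α H^α_∞(E), where c(α) > 0 depends only on α. -/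
open Set Metric MeasureTheory Filter Topology
open scoped ENNReal NNReal

noncomputable section

/-- Mean value inequality for complex derivative on a convex set. -/
lemma mvt_aux {f d : ℂ → ℂ} {s : Set ℂ} (hs : Convex ℝ s)
    (hd : ∀ w ∈ s, HasDerivAt f (d w) w) {M : ℝ} (hM : ∀ w ∈ s, ‖d w‖ ≤ M)
    {a b : ℂ} (ha : a ∈ s) (hb : b ∈ s) : ‖f b - f a‖ ≤ M * ‖b - a‖ := by
  exact hs.norm_image_sub_le_of_norm_hasFDerivWithin_le
    (f' := fun w => ((1 : ℂ →L[ℂ] ℂ).smulRight (d w)).restrictScalars ℝ)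
    (fun w hw => ((hd w hw).hasFDerivAt.restrictScalars ℝ).hasFDerivWithinAt)
    (fun w hw => by
      rw [ContinuousLinearMap.norm_restrictScalars, ContinuousLinearMap.norm_smulRight_apply,
        norm_one]
      simpa using hM w hw) ha hb

/-- Quantitative inverse function theorem: ball in the image. -/
lemma ball_subset_image {f : ℂ → ℂ} {z : ℂ} {ρ : ℝ} (hρ : 0 ≤ ρ) {a : ℂ} (ha : a ≠ 0)
    (hdiff : ∀ w ∈ closedBall z ρ, HasDerivAt f (deriv f w) w)
    (hosc : ∀ w ∈ closedBall z ρ, ‖deriv f w - a‖ ≤ ‖a‖ / 4) :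
    closedBall (f z) (3 / 4 * ‖a‖ * ρ) ⊆ f '' closedBall z ρ := by
  have ha4 : (0:ℝ) < ‖a‖ := norm_pos_iff.mpr ha
  set f' : ℂ →L[ℂ] ℂ := (1 : ℂ →L[ℂ] ℂ).smulRight a with hf'
  have happrox : ApproximatesLinearOn f f' (closedBall z ρ) (Real.toNNReal (‖a‖ / 4)) := by
    intro x hx y hy
    have key : ‖(fun w => f w - w * a) x - (fun w => f w - w * a) y‖ ≤ ‖a‖/4 * ‖x - y‖ := by
      refine mvt_aux (convex_closedBall z ρ) (d := fun w => deriv f w - a)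
        (fun w hw => ((hdiff w hw).sub ((hasDerivAt_id w).mul_const a)).congr_deriv (by ring))
        (fun w hw => hosc w hw) hy hx
    have : f x - f y - f' (x - y) = (fun w => f w - w * a) x - (fun w => f w - w * a) y := by
      simp only [hf', ContinuousLinearMap.smulRight_apply, ContinuousLinearMap.one_apply,
        smul_eq_mul]
      ring
    rw [this]
    rw [Real.coe_toNNReal _ (by positivity)]
    exact key
  have hsurj := happrox.surjOn_closedBall_of_nonlinearRightInverse
    ⟨fun y => a⁻¹ * y, ‖a⁻¹‖₊, fun y => by simp [norm_mul], fun y => by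
      simp only [hf', ContinuousLinearMap.smulRight_apply, ContinuousLinearMap.one_apply,
        smul_eq_mul]
      field_simp⟩ hρ (subset_refl _)
  have hnn : ((‖a⁻¹‖₊ : ℝ)⁻¹ - Real.toNNReal (‖a‖ / 4)) = 3/4 * ‖a‖ := by
    rw [coe_nnnorm, norm_inv, inv_inv, Real.coe_toNNReal _ (by positivity)]
    ring
  rw [hnn] at hsurj
  exact hsurj

/-- Counting separated points in an interval. -/
lemma card_sep_interval (s : Finset ℝ) {u v ℓ : ℝ} (hℓ : 0 < ℓ) (huv : u ≤ v)
    (hsub : ∀ p ∈ s, p ∈ Icc u v)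
    (hsep : ∀ p ∈ s, ∀ q ∈ s, p ≠ q → ℓ ≤ |p - q|) : (s.card : ℝ) ≤ (v - u) / ℓ + 1 := by
  classical
  have hinj : Set.InjOn (fun p => ⌊(p - u) / ℓ⌋₊) s := by
    intro p hp q hq hpq
    by_contra hne
    have h1 := hsep p hp q hq hne
    have hp0 : 0 ≤ (p - u) / ℓ := div_nonneg (by linarith [(hsub p hp).1]) hℓ.le
    have hq0 : 0 ≤ (q - u) / ℓ := div_nonneg (by linarith [(hsub q hq).1]) hℓ.le
    simp only at hpq
    have b1 : (p - u) / ℓ < ⌊(q - u)/ℓ⌋₊ + 1 := by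
      rw [← hpq]; exact Nat.lt_floor_add_one _
    have b2 : ((⌊(q - u)/ℓ⌋₊ : ℝ)) ≤ (q - u) / ℓ := Nat.floor_le hq0
    have b3 : (q - u) / ℓ < ⌊(p - u)/ℓ⌋₊ + 1 := by
      rw [hpq]; exact Nat.lt_floor_add_one _
    have b4 : ((⌊(p - u)/ℓ⌋₊ : ℝ)) ≤ (p - u) / ℓ := Nat.floor_le hp0
    rw [hpq] at b3 b4
    have e1 : p - u = (p - u) / ℓ * ℓ := (div_mul_cancel₀ _ hℓ.ne').symm
    have e2 : q - u = (q - u) / ℓ * ℓ := (div_mul_cancel₀ _ hℓ.ne').symm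
    have hPQ : (p - u)/ℓ - (q - u)/ℓ < 1 := by linarith
    have hQP : (q - u)/ℓ - (p - u)/ℓ < 1 := by linarith
    have : |p - q| < ℓ := by
      rw [abs_sub_lt_iff]
      constructor
      · nlinarith [hPQ, hℓ, e1, e2]
      · nlinarith [hQP, hℓ, e1, e2]
    linarith
  have hmap : ∀ p ∈ s, ⌊(p - u) / ℓ⌋₊ ∈ Finset.range (⌊(v - u) / ℓ⌋₊ + 1) := by
    intro p hp
    rw [Finset.mem_range, Nat.lt_succ_iff]
    exact Nat.floor_le_floor ((div_le_div_iff_of_pos_right hℓ).mpr (by linarith [(hsub p hp).2]))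
  have hcard := Finset.card_le_card_of_injOn _ hmap hinj
  rw [Finset.card_range] at hcard
  have : ((⌊(v - u) / ℓ⌋₊ : ℝ)) ≤ (v - u)/ℓ := Nat.floor_le (div_nonneg (by linarith) hℓ.le)
  calc (s.card : ℝ) ≤ (⌊(v - u) / ℓ⌋₊ + 1 : ℕ) := by exact_mod_cast hcard
    _ ≤ (v - u)/ℓ + 1 := by push_cast; linarith

/-- Counting disjoint balls inside a big ball via area. -/
lemma card_disj_balls (s : Finset ℝ) (c : ℝ → ℂ) {r R : ℝ} (hr : 0 < r)
    (hdisj : (s : Set ℝ).PairwiseDisjoint (fun p => closedBall (c p) r))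
    {w : ℂ} (hsub : ∀ p ∈ s, closedBall (c p) r ⊆ closedBall w R) :
    (s.card : ℝ) * r ^ 2 ≤ R ^ 2 := by
  classical
  rcases s.eq_empty_or_nonempty with rfl | ⟨p₀, hp₀⟩
  · simpa using sq_nonneg R
  have hR : 0 ≤ R := by
    have := hsub p₀ hp₀ (mem_closedBall_self hr.le)
    exact le_trans dist_nonneg (mem_closedBall.mp this)
  have hmeas := measure_biUnion_finset (μ := volume) hdisj
    (fun p _ => measurableSet_closedBall)
  have hle : ∑ p ∈ s, volume (closedBall (c p) r) ≤ volume (closedBall w R) := by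
    rw [← hmeas]
    exact measure_mono (Set.iUnion₂_subset hsub)
  have hballr : ∀ p : ℝ, volume (closedBall (c p) r) =
      ENNReal.ofReal (r ^ 2) * volume (ball (0:ℂ) 1) := by
    intro p
    rw [Measure.addHaar_closedBall volume _ hr.le, Complex.finrank_real_complex]
  have hballR : volume (closedBall w R) = ENNReal.ofReal (R ^ 2) * volume (ball (0:ℂ) 1) :=
    by rw [Measure.addHaar_closedBall volume _ hR, Complex.finrank_real_complex]
  simp only [hballr, Finset.sum_const, nsmul_eq_mul, hballR, ← mul_assoc] at hle
  have hκ0 : volume (ball (0:ℂ) 1) ≠ 0 := (measure_ball_pos _ _ one_pos).ne'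
  have hκt : volume (ball (0:ℂ) 1) ≠ ⊤ := measure_ball_lt_top.ne
  rw [ENNReal.mul_le_mul_iff_left hκ0 hκt] at hle
  have : ENNReal.ofReal ((s.card : ℝ) * r ^ 2) ≤ ENNReal.ofReal (R ^ 2) := by
    rw [ENNReal.ofReal_mul (by positivity)]
    simpa [ENNReal.ofReal_natCast] using hle
  exact (ENNReal.ofReal_le_ofReal_iff (by positivity)).mp this

lemma mem_segment_coords {a b w : ℂ} (h : w ∈ segment ℝ a b) :
    ∃ t : ℝ, 0 ≤ t ∧ t ≤ 1 ∧ w.re = a.re + t * (b.re - a.re) ∧ w.im = a.im + t * (b.im - a.im) := by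
  rw [segment_eq_image'] at h
  obtain ⟨t, ⟨ht0, ht1⟩, rfl⟩ := h
  refine ⟨t, ht0, ht1, ?_, ?_⟩
  · simp [Complex.add_re, Complex.real_smul, Complex.mul_re, Complex.sub_re, Complex.ofReal_re,
      Complex.ofReal_im, Complex.sub_im]
  · simp [Complex.add_im, Complex.real_smul, Complex.mul_im]


set_option maxHeartbeats 2000000 in
/-- under the sawtooth distortion hypothesis, `f` extends continuously to
`S(E) ∪ E` and the Hausdorff content of the image of `E` satisfies
`H^α_∞(f(E)) ≥ c(α) |f'(z₀)|^α H^α_∞(E)`. -/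
theorem image_content_lower_bound (α : ℝ) (hα0 : 0 < α) (hα1 : α < 1)
    (C : ℝ) (hC : 1 ≤ C) :
    ∃ c : ℝ, 0 < c ∧
      ∀ f : ℂ → ℂ, DifferentiableOn ℂ f UHP → Set.InjOn f UHP →
        ∀ z₀ ∈ UHP, ∀ E : Set ℝ, E.Nonempty → IsCompact E →
          E ⊆ Set.Ioo (z₀.re - z₀.im / 2) (z₀.re + z₀.im / 2) →
          (∀ w ∈ Sawtooth E z₀.re z₀.im,
            ‖deriv f z₀‖ / C ≤ ‖deriv f w‖ ∧ ‖deriv f w‖ ≤ C * ‖deriv f z₀‖) →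
          ∃ g : ℂ → ℂ,
            ContinuousOn g (Sawtooth E z₀.re z₀.im ∪ ((fun x : ℝ => (x : ℂ)) '' E)) ∧
            Set.EqOn g f (Sawtooth E z₀.re z₀.im) ∧
            ENNReal.ofReal (c * ‖deriv f z₀‖ ^ α) * hContent α E ≤
              hContent α (g '' ((fun x : ℝ => (x : ℂ)) '' E)) := by
  classical
  have hN₀pos : (0:ℝ) < (32*C^4+2)^2 + 3 := by positivity
  have hK₃pos : (0:ℝ) < 32 * C^3 := by positivity
  refine ⟨((((32*C^4+2)^2 + 3) * (64*C^3) ^ α))⁻¹, by positivity, ?_⟩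
  intro f hf hinj z₀ hz₀ E hEne hEcpt hEIoo hdist
  set x₀ : ℝ := z₀.re with hx₀
  set y₀ : ℝ := z₀.im with hy₀def
  have hy₀ : 0 < y₀ := hz₀
  set S : Set ℂ := Sawtooth E x₀ y₀ with hSdef
  set m' : ℝ := ‖deriv f z₀‖ with hm'def
  set M : ℝ := C * m' with hMdef
  have hm'0 : 0 ≤ m' := norm_nonneg _
  have hM0 : 0 ≤ M := by positivity
  have hUopen : IsOpen UHP := by
    have : UHP = Complex.im ⁻¹' Ioi 0 := rfl
    rw [this]
    exact isOpen_Ioi.preimage Complex.continuous_im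
  have hSU : S ⊆ UHP := fun w hw => hw.2.1
  have hup : ∀ w ∈ S, ‖deriv f w‖ ≤ M := fun w hw => (hdist w hw).2
  have hlow : ∀ w ∈ S, m' / C ≤ ‖deriv f w‖ := fun w hw => (hdist w hw).1
  have hC0 : (0:ℝ) < C := lt_of_lt_of_le one_pos hC
  have hd : ∀ w ∈ UHP, HasDerivAt f (deriv f w) w := fun w hw =>
    (hf.differentiableAt (hUopen.mem_nhds hw)).hasDerivAt
  have hEy₀ : ∀ x ∈ E, ∀ y ∈ E, |x - y| < y₀ := by
    intro x hx y hy
    have h1 := hEIoo hx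
    have h2 := hEIoo hy
    rw [abs_sub_lt_iff]
    constructor <;> [skip; skip] <;>
      · simp only [mem_Ioo, ← hx₀, ← hy₀def] at h1 h2
        linarith [h1.1, h1.2, h2.1, h2.2]
  have hEIoo' : ∀ x ∈ E, x₀ - y₀ / 2 < x ∧ x < x₀ + y₀ / 2 := by
    intro x hx
    have := hEIoo hx
    simp only [mem_Ioo, ← hx₀, ← hy₀def] at this
    exact this
  -- membership of segments in the sawtooth via the mean value theorem
  have key_seg : ∀ a b : ℂ, (segment ℝ a b ⊆ S) → ‖f b - f a‖ ≤ M * ‖b - a‖ := by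
    intro a b hseg
    exact mvt_aux (convex_segment a b) (fun w hw => hd w (hSU (hseg hw)))
      (fun w hw => hup w (hseg hw)) (left_mem_segment ℝ a b) (right_mem_segment ℝ a b)
  -- vertical segments over points of E lie in S
  have hvseg : ∀ x ∈ E, ∀ s t : ℝ, 0 < s → s ≤ t → t < y₀ →
      segment ℝ ((x:ℂ) + (s:ℂ)*Complex.I) ((x:ℂ) + (t:ℂ)*Complex.I) ⊆ S := by
    intro x hx s t hs hst ht w hw
    obtain ⟨θ, hθ0, hθ1, hre, him⟩ := mem_segment_coords hw
    simp only [Complex.add_re, Complex.ofReal_re, Complex.mul_re, Complex.I_re, Complex.I_im,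
      Complex.ofReal_im, Complex.add_im, Complex.mul_im] at hre him
    have hre' : w.re = x := by rw [hre]; ring
    have him' : w.im = s + θ * (t - s) := by rw [him]; ring
    have him1 : s ≤ w.im := by nlinarith
    have him2 : w.im ≤ t := by nlinarith
    refine ⟨?_, by linarith, ?_, by linarith⟩
    · rw [hre']
      exact ⟨(hEIoo' x hx).1, (hEIoo' x hx).2⟩
    · rw [hre', infDist_zero_of_mem hx]
      linarith
  have hvert : ∀ x ∈ E, ∀ s t : ℝ, 0 < s → s ≤ t → t < y₀ →
      ‖f ((x:ℂ) + (t:ℂ)*Complex.I) - f ((x:ℂ) + (s:ℂ)*Complex.I)‖ ≤ M * (t - s) := by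
    intro x hx s t hs hst ht
    have := key_seg _ _ (hvseg x hx s t hs hst ht)
    have hnorm : ‖((x:ℂ) + (t:ℂ)*Complex.I) - ((x:ℂ) + (s:ℂ)*Complex.I)‖ = t - s := by
      have : ((x:ℂ) + (t:ℂ)*Complex.I) - ((x:ℂ) + (s:ℂ)*Complex.I)
          = ((t - s : ℝ):ℂ)*Complex.I := by push_cast; ring
      rw [this, norm_mul, Complex.norm_I, mul_one, Complex.norm_real, Real.norm_eq_abs,
        abs_of_nonneg (by linarith : (0:ℝ) ≤ t - s)]
    rwa [hnorm] at this
  -- the extension g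
  set g : ℂ → ℂ := fun z => if z.im = 0 then
      limUnder (𝓝[>] (0:ℝ)) (fun ε : ℝ => f ((z.re:ℂ) + (ε:ℂ)*Complex.I)) else f z with hgdef
  have hgS : Set.EqOn g f S := fun z hz => if_neg (ne_of_gt hz.2.1)
  have hglim : ∀ x ∈ E, Tendsto (fun ε : ℝ => f ((x:ℂ) + (ε:ℂ)*Complex.I)) (𝓝[>] (0:ℝ))
      (𝓝 (g (x:ℂ))) := by
    intro x hx
    have hcauchy : Cauchy (Filter.map (fun ε : ℝ => f ((x:ℂ) + (ε:ℂ)*Complex.I)) (𝓝[>] (0:ℝ))) := by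
      rw [Metric.cauchy_iff]
      refine ⟨Filter.map_neBot, fun ε hε => ?_⟩
      set δ : ℝ := min (ε / (2 * (M+1))) (y₀/2) with hδdef
      have hδ0 : 0 < δ := by
        apply lt_min
        · positivity
        · linarith
      refine ⟨(fun ε : ℝ => f ((x:ℂ) + (ε:ℂ)*Complex.I)) '' Ioo 0 δ, ?_, ?_⟩
      · exact image_mem_map (Ioo_mem_nhdsGT_of_mem ⟨le_refl _, hδ0⟩)
      · rintro _ ⟨s, hs, rfl⟩ _ ⟨t, ht, rfl⟩
        rcases le_total s t with hst | hst
        · have := hvert x hx s t hs.1 hst (by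
            calc t < δ := ht.2
            _ ≤ y₀/2 := min_le_right _ _
            _ < y₀ := by linarith)
          rw [dist_comm, dist_eq_norm]
          calc ‖f ((x:ℂ) + (t:ℂ)*Complex.I) - f ((x:ℂ) + (s:ℂ)*Complex.I)‖ ≤ M * (t - s) := this
            _ ≤ (M+1) * δ := by nlinarith [ht.2, hs.1, hδ0]
            _ < ε := by
              have h1 : δ ≤ ε / (2 * (M+1)) := min_le_left _ _
              have h2 : (M+1) * (ε / (2 * (M+1))) = ε/2 := by field_simp
              nlinarith
        · have := hvert x hx t s ht.1 hst (by
            calc s < δ := hs.2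
            _ ≤ y₀/2 := min_le_right _ _
            _ < y₀ := by linarith)
          rw [dist_eq_norm]
          calc ‖f ((x:ℂ) + (s:ℂ)*Complex.I) - f ((x:ℂ) + (t:ℂ)*Complex.I)‖ ≤ M * (s - t) := this
            _ ≤ (M+1) * δ := by nlinarith [hs.2, ht.1, hδ0]
            _ < ε := by
              have h1 : δ ≤ ε / (2 * (M+1)) := min_le_left _ _
              have h2 : (M+1) * (ε / (2 * (M+1))) = ε/2 := by field_simp
              nlinarith
    obtain ⟨L, hL⟩ := CompleteSpace.complete hcauchy
    have hLz : Tendsto (fun ε : ℝ => f ((x:ℂ) + (ε:ℂ)*Complex.I)) (𝓝[>] (0:ℝ)) (𝓝 L) := hL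
    have : g (x:ℂ) = L := by
      rw [hgdef]
      simp only [Complex.ofReal_im, if_pos rfl, Complex.ofReal_re]
      exact hLz.limUnder_eq
    rw [this]
    exact hLz
  have h2a : ∀ x ∈ E, ∀ t : ℝ, 0 < t → t < y₀ →
      ‖g (x:ℂ) - f ((x:ℂ) + (t:ℂ)*Complex.I)‖ ≤ M * t := by
    intro x hx t ht hty
    have hcont : Tendsto (fun ε : ℝ => ‖f ((x:ℂ) + (ε:ℂ)*Complex.I)
        - f ((x:ℂ) + (t:ℂ)*Complex.I)‖) (𝓝[>] (0:ℝ))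
        (𝓝 (‖g (x:ℂ) - f ((x:ℂ) + (t:ℂ)*Complex.I)‖)) :=
      ((hglim x hx).sub tendsto_const_nhds).norm
    refine le_of_tendsto hcont ?_
    filter_upwards [Ioo_mem_nhdsGT_of_mem ⟨le_refl (0:ℝ), ht⟩] with ε hε
    have := hvert x hx ε t hε.1 hε.2.le hty
    rw [← norm_neg]
    simp only [neg_sub]
    calc ‖f ((x:ℂ) + (t:ℂ)*Complex.I) - f ((x:ℂ) + (ε:ℂ)*Complex.I)‖ ≤ M * (t - ε) := this
      _ ≤ M * t := by nlinarith [hε.1]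
  -- horizontal segments at tent height
  have h2b : ∀ x ∈ E, ∀ y ∈ E, ‖g (x:ℂ) - g (y:ℂ)‖ ≤ 3 * M * |x - y| := by
    intro x hx y hy
    rcases eq_or_ne x y with rfl | hne
    · simp
    set d : ℝ := |x - y| with hddef
    have hd0 : 0 < d := abs_pos.mpr (sub_ne_zero.mpr hne)
    have hdy : d < y₀ := hEy₀ x hx y hy
    have hhseg : segment ℝ ((x:ℂ) + (d:ℂ)*Complex.I) ((y:ℂ) + (d:ℂ)*Complex.I) ⊆ S := by
      intro w hw
      obtain ⟨θ, hθ0, hθ1, hre, him⟩ := mem_segment_coords hw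
      simp only [Complex.add_re, Complex.ofReal_re, Complex.mul_re, Complex.I_re, Complex.I_im,
        Complex.ofReal_im, Complex.add_im, Complex.mul_im] at hre him
      have hre' : w.re = x + θ * (y - x) := by rw [hre]; ring
      have him' : w.im = d := by rw [him]; ring
      have h1 := hEIoo' x hx
      have h2 := hEIoo' y hy
      have hrl : x₀ - y₀/2 < w.re := by
        rw [hre']
        rcases le_total x y with h | h
        · nlinarith [h1.1]
        · nlinarith [h2.1]
      have hrr : w.re < x₀ + y₀/2 := by
        rw [hre']
        rcases le_total x y with h | h
        · nlinarith [h2.2]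
        · nlinarith [h1.2]
      refine ⟨⟨hrl, hrr⟩, by rw [him']; exact hd0, ?_, by rw [him']; exact hdy⟩
      have : infDist w.re E ≤ dist w.re x := infDist_le_dist_of_mem hx
      rw [him']
      calc infDist w.re E ≤ dist w.re x := this
        _ ≤ d := by
          rw [Real.dist_eq, hre']
          have : x + θ * (y - x) - x = θ * (y - x) := by ring
          rw [this, abs_mul]
          calc |θ| * |y - x| ≤ 1 * |y - x| := by
                rw [abs_of_nonneg hθ0]; nlinarith [abs_nonneg (y - x)]
            _ = d := by rw [one_mul, hddef, abs_sub_comm]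
    have hmid := key_seg _ _ hhseg
    have hnorm : ‖((y:ℂ) + (d:ℂ)*Complex.I) - ((x:ℂ) + (d:ℂ)*Complex.I)‖ = d := by
      have : ((y:ℂ) + (d:ℂ)*Complex.I) - ((x:ℂ) + (d:ℂ)*Complex.I) = ((y - x : ℝ):ℂ) := by
        push_cast; ring
      rw [this, Complex.norm_real, Real.norm_eq_abs, abs_sub_comm]
    rw [hnorm] at hmid
    have hxa := h2a x hx d hd0 hdy
    have hya := h2a y hy d hd0 hdy
    calc ‖g (x:ℂ) - g (y:ℂ)‖
        ≤ ‖g (x:ℂ) - f ((x:ℂ) + (d:ℂ)*Complex.I)‖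
          + ‖f ((x:ℂ) + (d:ℂ)*Complex.I) - f ((y:ℂ) + (d:ℂ)*Complex.I)‖
          + ‖f ((y:ℂ) + (d:ℂ)*Complex.I) - g (y:ℂ)‖ := by
            have := norm_sub_le_norm_sub_add_norm_sub (g (x:ℂ)) (f ((x:ℂ) + (d:ℂ)*Complex.I)) (g (y:ℂ))
            have h2 := norm_sub_le_norm_sub_add_norm_sub (f ((x:ℂ) + (d:ℂ)*Complex.I))
              (f ((y:ℂ) + (d:ℂ)*Complex.I)) (g (y:ℂ))
            linarith
      _ ≤ M * d + M * d + M * d := by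
          refine add_le_add (add_le_add hxa ?_) ?_
          · rw [← norm_neg]; simp only [neg_sub]; linarith [hmid]
          · rw [← norm_neg]; simp only [neg_sub]; exact hya
      _ = 3 * M * |x - y| := by rw [hddef]; ring
  -- slanted approach estimate
  have h2c : ∀ ξ ∈ E, ∀ z ∈ S, dist z (ξ:ℂ) < y₀/4 → ‖f z - g (ξ:ℂ)‖ ≤ 4 * M * dist z (ξ:ℂ) := by
    intro ξ hξ z hz hnear
    set v : ℝ := z.im with hvdef
    set d₁ : ℝ := |z.re - ξ| with hd₁def
    have hv0 : 0 < v := hz.2.1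
    have hvle : v ≤ dist z (ξ:ℂ) := by
      rw [Complex.dist_eq]
      have : v = |(z - (ξ:ℂ)).im| := by
        rw [Complex.sub_im, Complex.ofReal_im, sub_zero]
        exact (abs_of_pos hv0).symm
      rw [this]
      exact Complex.abs_im_le_norm _
    have hd₁le : d₁ ≤ dist z (ξ:ℂ) := by
      rw [Complex.dist_eq, hd₁def]
      have : z.re - ξ = (z - (ξ:ℂ)).re := by simp
      rw [this]
      exact Complex.abs_re_le_norm _
    have hsum : v + d₁ < y₀ := by nlinarith [hnear, hvle, hd₁le, hy₀]
    set w₀ : ℂ := (ξ:ℂ) + ((v + d₁ : ℝ):ℂ)*Complex.I with hw₀def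
    have hseg : segment ℝ z w₀ ⊆ S := by
      intro w hw
      obtain ⟨θ, hθ0, hθ1, hre, him⟩ := mem_segment_coords hw
      simp only [hw₀def, Complex.add_re, Complex.ofReal_re, Complex.mul_re, Complex.I_re,
        Complex.I_im, Complex.ofReal_im, Complex.add_im, Complex.mul_im] at hre him
      have hre' : w.re = z.re + θ * (ξ - z.re) := by rw [hre]; ring
      have him' : w.im = v + θ * d₁ := by rw [him, hvdef]; ring
      have hξI := hEIoo' ξ hξ
      have hzI := hz.1
      have hrl : x₀ - y₀/2 < w.re := by
        rw [hre']
        rcases le_total z.re ξ with h | h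
        · nlinarith [hzI.1]
        · nlinarith [hξI.1]
      have hrr : w.re < x₀ + y₀/2 := by
        rw [hre']
        rcases le_total z.re ξ with h | h
        · nlinarith [hξI.2]
        · nlinarith [hzI.2]
      have him0 : 0 < w.im := by rw [him']; nlinarith [abs_nonneg (z.re - ξ)]
      have himy : w.im < y₀ := by
        rw [him']
        nlinarith [abs_nonneg (z.re - ξ)]
      refine ⟨⟨hrl, hrr⟩, him0, ?_, himy⟩
      calc infDist w.re E ≤ infDist z.re E + dist w.re z.re := infDist_le_infDist_add_dist
        _ ≤ v + θ * d₁ := by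
            have h1 : infDist z.re E ≤ v := hz.2.2.1
            have h2 : dist w.re z.re = θ * d₁ := by
              rw [Real.dist_eq, hre']
              have : z.re + θ * (ξ - z.re) - z.re = θ * (ξ - z.re) := by ring
              rw [this, abs_mul, abs_of_nonneg hθ0, hd₁def, abs_sub_comm]
            linarith
        _ = w.im := him'.symm
    have hstep1 := key_seg _ _ hseg
    have hnw₀ : ‖w₀ - z‖ ≤ 2 * d₁ := by
      have h1 : (w₀ - z).re = ξ - z.re := by simp [hw₀def]
      have h2 : (w₀ - z).im = d₁ := by simp [hw₀def, hvdef]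
      calc ‖w₀ - z‖ ≤ |(w₀ - z).re| + |(w₀ - z).im| := Complex.norm_le_abs_re_add_abs_im _
        _ = d₁ + d₁ := by rw [h1, h2, abs_abs, hd₁def, abs_sub_comm]
        _ = 2 * d₁ := by ring
    have hstep2 := h2a ξ hξ (v + d₁) (by nlinarith [abs_nonneg (z.re - ξ)]) hsum
    calc ‖f z - g (ξ:ℂ)‖ ≤ ‖f z - f w₀‖ + ‖f w₀ - g (ξ:ℂ)‖ := norm_sub_le_norm_sub_add_norm_sub _ _ _
      _ ≤ M * (2 * d₁) + M * (v + d₁) := by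
          refine add_le_add ?_ ?_
          · rw [← norm_neg]
            simp only [neg_sub]
            calc ‖f w₀ - f z‖ ≤ M * ‖w₀ - z‖ := hstep1
              _ ≤ M * (2 * d₁) := by nlinarith [hnw₀, norm_nonneg (w₀ - z)]
          · rw [← norm_neg]
            simp only [neg_sub]
            exact hstep2
      _ ≤ 4 * M * dist z (ξ:ℂ) := by nlinarith [hvle, hd₁le, dist_nonneg (x := z) (y := ((ξ:ℂ)))]
  have hdistR : ∀ a b : ℝ, dist (a:ℂ) (b:ℂ) = |a - b| := by
    intro a b
    rw [Complex.dist_eq, ← Complex.ofReal_sub, Complex.norm_real, Real.norm_eq_abs]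
  refine ⟨g, ?_, hgS, ?_⟩
  · -- continuity
    intro z hz
    rcases hz with hzS | ⟨ξ, hξ, rfl⟩
    · have hfc : ContinuousAt f z := (hf.differentiableAt (hUopen.mem_nhds (hSU hzS))).continuousAt
      refine hfc.continuousWithinAt.congr_of_eventuallyEq ?_ (hgS hzS)
      have hmem : {w : ℂ | 0 < w.im} ∈
          𝓝[S ∪ ((fun x : ℝ => (x : ℂ)) '' E)] z :=
        mem_nhdsWithin_of_mem_nhds (hUopen.mem_nhds (hSU hzS))
      filter_upwards [hmem] with w hw
      exact if_neg (ne_of_gt hw)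
    · rw [Metric.continuousWithinAt_iff]
      intro ε hε
      refine ⟨min (y₀/8) (ε / (4*M+1)), by positivity, ?_⟩
      intro w hw hwd
      have hwd1 : dist w (ξ:ℂ) < y₀/8 := lt_of_lt_of_le hwd (min_le_left _ _)
      have hwd2 : dist w (ξ:ℂ) < ε / (4*M+1) := lt_of_lt_of_le hwd (min_le_right _ _)
      rcases hw with hwS | ⟨η, hη, rfl⟩
      · have := h2c ξ hξ w hwS (by linarith)
        rw [dist_eq_norm, hgS hwS]
        calc ‖f w - g (ξ:ℂ)‖ ≤ 4 * M * dist w (ξ:ℂ) := this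
          _ ≤ 4 * M * (ε / (4*M+1)) := by nlinarith [dist_nonneg (x := w) (y := ((ξ:ℂ)))]
          _ < ε := by
            rw [mul_div_assoc']
            rw [div_lt_iff₀ (by positivity)]
            nlinarith
      · have := h2b η hη ξ hξ
        rw [dist_eq_norm]
        have hde : dist ((η:ℝ):ℂ) ((ξ:ℝ):ℂ) = |η - ξ| := hdistR η ξ
        calc ‖g (η:ℂ) - g (ξ:ℂ)‖ ≤ 3 * M * |η - ξ| := this
          _ ≤ 4 * M * (ε / (4*M+1)) := by
              rw [← hde]
              nlinarith [dist_nonneg (x := ((η:ℝ):ℂ)) (y := ((ξ:ℝ):ℂ)), hwd2]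
          _ < ε := by
            rw [mul_div_assoc']
            rw [div_lt_iff₀ (by positivity)]
            nlinarith
  · -- content inequality
    by_cases hm'z : m' = 0
    · rw [hm'z, Real.zero_rpow hα0.ne', mul_zero, ENNReal.ofReal_zero, zero_mul]
      exact zero_le
    have hm'pos : 0 < m' := lt_of_le_of_ne hm'0 (Ne.symm hm'z)
    have hMpos : 0 < M := by rw [hMdef]; positivity
    set K₃ : ℝ := 32 * C^3 with hK₃def
    set N₀ : ℝ := (32*C^4+2)^2 + 3 with hN₀def
    have hN₀p : 0 < N₀ := hN₀pos
    have hK₃p : 0 < K₃ := hK₃pos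
    have claim : ∀ ρ ℓ' : ℝ, 0 ≤ ρ → 0 < ℓ' → K₃ * ρ / m' ≤ ℓ' →
        ∀ F : Set ℂ, (∀ y1 ∈ F, ∀ y2 ∈ F, dist y1 y2 ≤ ρ) →
        ∀ t : Finset ℝ, (∀ p ∈ t, p ∈ E ∧ g (p:ℂ) ∈ F) →
        (∀ p ∈ t, ∀ q ∈ t, p ≠ q → ℓ' ≤ |p - q|) → (t.card : ℝ) ≤ N₀ := by
      intro ρ ℓ' hρ hℓ' hℓmin F hFdiam t htA htsep
      have hzre : ∀ p : ℝ, ((p:ℂ) + (ℓ':ℂ)*Complex.I).re = p := by intro p; simp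
      have hzim : ∀ p : ℝ, ((p:ℂ) + (ℓ':ℂ)*Complex.I).im = ℓ' := by intro p; simp
      have hzdist : ∀ p q : ℝ, dist ((p:ℂ) + (ℓ':ℂ)*Complex.I) ((q:ℂ) + (ℓ':ℂ)*Complex.I)
          = |p - q| := by
        intro p q
        rw [Complex.dist_eq]
        have : ((p:ℂ) + (ℓ':ℂ)*Complex.I) - ((q:ℂ) + (ℓ':ℂ)*Complex.I) = ((p - q : ℝ):ℂ) := by
          push_cast; ring
        rw [this, Complex.norm_real, Real.norm_eq_abs]
      by_cases hbig : y₀/2 ≤ ℓ'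
      · have hsub : ∀ p ∈ t, p ∈ Icc (x₀ - y₀/2) (x₀ + y₀/2) := by
          intro p hp
          have := hEIoo' p (htA p hp).1
          exact ⟨this.1.le, this.2.le⟩
        have hcount := card_sep_interval t hℓ' (by linarith) hsub htsep
        have heq : (x₀ + y₀/2 - (x₀ - y₀/2)) = y₀ := by ring
        rw [heq] at hcount
        have hy2 : y₀ / ℓ' ≤ 2 := by
          rw [div_le_iff₀ hℓ']
          linarith
        calc (t.card:ℝ) ≤ y₀/ℓ' + 1 := hcount
          _ ≤ 3 := by linarith
          _ ≤ N₀ := by rw [hN₀def]; nlinarith [sq_nonneg (32*C^4+2)]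
      · push_neg at hbig
        classical
        set tb1 := t.filter (fun p => p ≤ (x₀ - y₀/2) + ℓ'/2) with htb1def
        set tb2 := t.filter (fun p => (x₀ + y₀/2) - ℓ'/2 ≤ p) with htb2def
        set tg := t.filter (fun p => ¬(p ≤ (x₀ - y₀/2) + ℓ'/2) ∧
          ¬((x₀ + y₀/2) - ℓ'/2 ≤ p)) with htgdef
        have hsplit : t.card ≤ tb1.card + tb2.card + tg.card := by
          have hsub : t ⊆ (tb1 ∪ tb2) ∪ tg := by
            intro p hp
            by_cases h1 : p ≤ (x₀ - y₀/2) + ℓ'/2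
            · exact Finset.mem_union_left _
                (Finset.mem_union_left _ (Finset.mem_filter.mpr ⟨hp, h1⟩))
            · by_cases h2 : (x₀ + y₀/2) - ℓ'/2 ≤ p
              · exact Finset.mem_union_left _
                  (Finset.mem_union_right _ (Finset.mem_filter.mpr ⟨hp, h2⟩))
              · exact Finset.mem_union_right _ (Finset.mem_filter.mpr ⟨hp, ⟨h1, h2⟩⟩)
          calc t.card ≤ ((tb1 ∪ tb2) ∪ tg).card := Finset.card_le_card hsub
            _ ≤ (tb1 ∪ tb2).card + tg.card := Finset.card_union_le _ _
            _ ≤ tb1.card + tb2.card + tg.card := by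
                linarith [Finset.card_union_le tb1 tb2]
        have hb1card : (tb1.card : ℝ) ≤ 3/2 := by
          have hcount := card_sep_interval tb1 (u := x₀ - y₀/2) (v := (x₀ - y₀/2) + ℓ'/2)
            hℓ' (by linarith)
            (fun p hp => ⟨(hEIoo' p (htA p (Finset.mem_filter.mp hp).1).1).1.le,
              (Finset.mem_filter.mp hp).2⟩)
            (fun p hp q hq hne => htsep p (Finset.mem_filter.mp hp).1 q
              (Finset.mem_filter.mp hq).1 hne)
          have heq : ((x₀ - y₀/2) + ℓ'/2 - (x₀ - y₀/2))/ℓ' = 1/2 := by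
            field_simp
            ring
          rw [heq] at hcount
          linarith
        have hb2card : (tb2.card : ℝ) ≤ 3/2 := by
          have hcount := card_sep_interval tb2 (u := (x₀ + y₀/2) - ℓ'/2) (v := x₀ + y₀/2)
            hℓ' (by linarith)
            (fun p hp => ⟨(Finset.mem_filter.mp hp).2,
              (hEIoo' p (htA p (Finset.mem_filter.mp hp).1).1).2.le⟩)
            (fun p hp q hq hne => htsep p (Finset.mem_filter.mp hp).1 q
              (Finset.mem_filter.mp hq).1 hne)
          have heq : (x₀ + y₀/2 - ((x₀ + y₀/2) - ℓ'/2))/ℓ' = 1/2 := by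
            field_simp
            ring
          rw [heq] at hcount
          linarith
        -- the good points
        set r₁ : ℝ := m' * ℓ' / (32 * C^3) with hr₁def
        have hr₁pos : 0 < r₁ := by rw [hr₁def]; positivity
        set ρ₁ : ℝ := ℓ' / (24 * C^2) with hρ₁def
        have hρ₁pos : 0 < ρ₁ := by rw [hρ₁def]; positivity
        have hρ₁ℓ : ρ₁ ≤ ℓ'/24 := by
          rw [hρ₁def, div_le_div_iff₀ (by positivity) (by norm_num)]
          nlinarith [mul_nonneg hℓ'.le (by nlinarith [hC] : (0:ℝ) ≤ C^2 - 1)]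
        have htgE : ∀ p ∈ tg, p ∈ E := fun p hp => (htA p (Finset.mem_filter.mp hp).1).1
        have htgF : ∀ p ∈ tg, g (p:ℂ) ∈ F := fun p hp => (htA p (Finset.mem_filter.mp hp).1).2
        have htgIoo : ∀ p ∈ tg, (x₀ - y₀/2) + ℓ'/2 < p ∧ p < (x₀ + y₀/2) - ℓ'/2 := by
          intro p hp
          have h := (Finset.mem_filter.mp hp).2
          exact ⟨lt_of_not_ge h.1, lt_of_not_ge h.2⟩
        have hzpS : ∀ p ∈ tg, ((p:ℂ) + (ℓ':ℂ)*Complex.I) ∈ S := by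
          intro p hp
          refine ⟨?_, ?_, ?_, ?_⟩
          · rw [hzre]
            exact ⟨(hEIoo' p (htgE p hp)).1, (hEIoo' p (htgE p hp)).2⟩
          · rw [hzim]; exact hℓ'
          · rw [hzre, hzim, infDist_zero_of_mem (htgE p hp)]; exact hℓ'.le
          · rw [hzim]; linarith
        have hballS : ∀ p ∈ tg, Metric.ball ((p:ℂ) + (ℓ':ℂ)*Complex.I) (ℓ'/2) ⊆ S := by
          intro p hp w hw
          rw [mem_ball, dist_eq_norm] at hw
          have hre : |w.re - p| < ℓ'/2 := by
            have h1 : (w - ((p:ℂ) + (ℓ':ℂ)*Complex.I)).re = w.re - p := by simp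
            calc |w.re - p| = |(w - ((p:ℂ) + (ℓ':ℂ)*Complex.I)).re| := by rw [h1]
              _ ≤ ‖w - ((p:ℂ) + (ℓ':ℂ)*Complex.I)‖ := Complex.abs_re_le_norm _
              _ < ℓ'/2 := hw
          have him : |w.im - ℓ'| < ℓ'/2 := by
            have h1 : (w - ((p:ℂ) + (ℓ':ℂ)*Complex.I)).im = w.im - ℓ' := by simp
            calc |w.im - ℓ'| = |(w - ((p:ℂ) + (ℓ':ℂ)*Complex.I)).im| := by rw [h1]
              _ ≤ ‖w - ((p:ℂ) + (ℓ':ℂ)*Complex.I)‖ := Complex.abs_im_le_norm _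
              _ < ℓ'/2 := hw
          rw [abs_sub_lt_iff] at hre him
          have hIp := htgIoo p hp
          refine ⟨⟨by linarith [hIp.1], by linarith [hIp.2]⟩, by linarith, ?_, by linarith⟩
          calc infDist w.re E ≤ infDist p E + dist w.re p := infDist_le_infDist_add_dist
            _ = |w.re - p| := by rw [infDist_zero_of_mem (htgE p hp), Real.dist_eq, zero_add]
            _ ≤ w.im := by
                rw [abs_sub_le_iff]
                constructor <;> linarith [him.1, him.2, hre.1, hre.2]
        have hdfan : DifferentiableOn ℂ (deriv f) UHP :=
          ((hf.analyticOnNhd hUopen).deriv).differentiableOn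
        have hosc : ∀ p ∈ tg, ∀ w ∈ closedBall ((p:ℂ) + (ℓ':ℂ)*Complex.I) ρ₁,
            ‖deriv f w - deriv f ((p:ℂ) + (ℓ':ℂ)*Complex.I)‖
              ≤ ‖deriv f ((p:ℂ) + (ℓ':ℂ)*Complex.I)‖ / 4 := by
          intro p hp w hw
          have hdf : DifferentiableOn ℂ (deriv f) (ball ((p:ℂ) + (ℓ':ℂ)*Complex.I) (ℓ'/2)) :=
            hdfan.mono (subset_trans (hballS p hp) hSU)
          have hmaps : MapsTo (deriv f) (ball ((p:ℂ) + (ℓ':ℂ)*Complex.I) (ℓ'/2))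
              (ball (deriv f ((p:ℂ) + (ℓ':ℂ)*Complex.I)) (3*M)) := by
            intro w' hw'
            rw [mem_ball, dist_eq_norm]
            calc ‖deriv f w' - deriv f ((p:ℂ) + (ℓ':ℂ)*Complex.I)‖
                ≤ ‖deriv f w'‖ + ‖deriv f ((p:ℂ) + (ℓ':ℂ)*Complex.I)‖ := norm_sub_le _ _
              _ ≤ M + M := add_le_add (hup _ (hballS p hp hw')) (hup _ (hzpS p hp))
              _ < 3*M := by linarith
          have hwball : w ∈ ball ((p:ℂ) + (ℓ':ℂ)*Complex.I) (ℓ'/2) := by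
            have := mem_closedBall.mp hw
            exact mem_ball.mpr (lt_of_le_of_lt this (by linarith [hρ₁ℓ, hℓ']))
          have hswz := Complex.dist_le_div_mul_dist_of_mapsTo_ball hdf (hmaps.mono_right ball_subset_closedBall) hwball
          have hdw : dist w ((p:ℂ) + (ℓ':ℂ)*Complex.I) ≤ ρ₁ := mem_closedBall.mp hw
          have hbound : dist (deriv f w) (deriv f ((p:ℂ) + (ℓ':ℂ)*Complex.I)) ≤ m'/C/4 := by
            calc dist (deriv f w) (deriv f ((p:ℂ) + (ℓ':ℂ)*Complex.I))
                ≤ 3*M/(ℓ'/2) * dist w ((p:ℂ) + (ℓ':ℂ)*Complex.I) := hswz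
              _ ≤ 3*M/(ℓ'/2) * ρ₁ := by
                  refine mul_le_mul_of_nonneg_left hdw ?_
                  positivity
              _ = m'/C/4 := by
                  rw [hρ₁def, hMdef]
                  field_simp
                  ring
          rw [← dist_eq_norm]
          calc dist (deriv f w) (deriv f ((p:ℂ) + (ℓ':ℂ)*Complex.I)) ≤ m'/C/4 := hbound
            _ ≤ ‖deriv f ((p:ℂ) + (ℓ':ℂ)*Complex.I)‖/4 := by
                have := hlow _ (hzpS p hp)
                linarith
        have hane : ∀ p ∈ tg, deriv f ((p:ℂ) + (ℓ':ℂ)*Complex.I) ≠ 0 := by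
          intro p hp
          have h1 := hlow _ (hzpS p hp)
          have h2 : 0 < m'/C := by positivity
          exact norm_pos_iff.mp (lt_of_lt_of_le h2 h1)
        have hcbsub : ∀ p ∈ tg, closedBall ((p:ℂ) + (ℓ':ℂ)*Complex.I) ρ₁
            ⊆ ball ((p:ℂ) + (ℓ':ℂ)*Complex.I) (ℓ'/2) :=
          fun p _ => closedBall_subset_ball (by linarith [hρ₁ℓ, hℓ'])
        have him : ∀ p ∈ tg, closedBall (f ((p:ℂ) + (ℓ':ℂ)*Complex.I)) r₁
            ⊆ f '' closedBall ((p:ℂ) + (ℓ':ℂ)*Complex.I) ρ₁ := by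
          intro p hp
          have hsub := ball_subset_image hρ₁pos.le (hane p hp)
            (fun w hw => hd w (hSU (hballS p hp (hcbsub p hp hw)))) (hosc p hp)
          refine subset_trans (closedBall_subset_closedBall ?_) hsub
          have h1 := hlow _ (hzpS p hp)
          have heq : 3/4 * (m'/C) * ρ₁ = r₁ := by
            rw [hρ₁def, hr₁def]
            field_simp
            ring
          calc r₁ = 3/4 * (m'/C) * ρ₁ := heq.symm
            _ ≤ 3/4 * ‖deriv f ((p:ℂ) + (ℓ':ℂ)*Complex.I)‖ * ρ₁ := by nlinarith [hρ₁pos.le]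
        have hdisj : (tg : Set ℝ).PairwiseDisjoint
            (fun p => closedBall (f ((p:ℂ) + (ℓ':ℂ)*Complex.I)) r₁) := by
          intro p hp q hq hne
          simp only [Function.onFun]
          rw [Set.disjoint_left]
          intro y hyp hyq
          obtain ⟨wp, hwp, hwpy⟩ := him p hp hyp
          obtain ⟨wq, hwq, hwqy⟩ := him q hq hyq
          have hwpq : wp = wq := hinj (hSU (hballS p hp (hcbsub p hp hwp)))
            (hSU (hballS q hq (hcbsub q hq hwq))) (hwpy.trans hwqy.symm)
          have hsep := htsep p (Finset.mem_filter.mp hp).1 q (Finset.mem_filter.mp hq).1 hne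
          have htri := dist_triangle4 ((p:ℂ) + (ℓ':ℂ)*Complex.I) wp wq
            ((q:ℂ) + (ℓ':ℂ)*Complex.I)
          rw [hzdist] at htri
          have h1 : dist ((p:ℂ) + (ℓ':ℂ)*Complex.I) wp ≤ ρ₁ := by
            rw [dist_comm]; exact mem_closedBall.mp hwp
          have h2 : dist wq ((q:ℂ) + (ℓ':ℂ)*Complex.I) ≤ ρ₁ := mem_closedBall.mp hwq
          have h3 : dist wp wq = 0 := by rw [hwpq, dist_self]
          have : |p - q| ≤ ρ₁ + 0 + ρ₁ := by
            refine le_trans htri ?_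
            gcongr
            exact le_of_eq h3
          linarith [hρ₁ℓ]
        have hcard_g : (tg.card : ℝ) ≤ (32*C^4+2)^2 := by
          rcases tg.eq_empty_or_nonempty with htg0 | ⟨p₀, hp₀⟩
          · rw [htg0]
            simp
            positivity
          · have hρr : ρ ≤ r₁ := by
              rw [div_le_iff₀ hm'pos] at hℓmin
              rw [hr₁def, le_div_iff₀ (by positivity)]
              calc ρ * (32 * C^3) = K₃ * ρ := by rw [hK₃def]; ring
                _ ≤ ℓ' * m' := hℓmin
                _ = m' * ℓ' := by ring
            have hcenter : ∀ p ∈ tg, closedBall (f ((p:ℂ) + (ℓ':ℂ)*Complex.I)) r₁ ⊆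
                closedBall (g (p₀:ℂ)) (M*ℓ' + ρ + r₁) := by
              intro p hp
              apply closedBall_subset_closedBall'
              have h1 : dist (f ((p:ℂ) + (ℓ':ℂ)*Complex.I)) (g (p:ℂ)) ≤ M * ℓ' := by
                rw [dist_comm, dist_eq_norm]
                exact h2a p (htgE p hp) ℓ' hℓ' (by linarith)
              have h2 : dist (g (p:ℂ)) (g (p₀:ℂ)) ≤ ρ :=
                hFdiam _ (htgF p hp) _ (htgF p₀ hp₀)
              have h3 := dist_triangle (f ((p:ℂ) + (ℓ':ℂ)*Complex.I)) (g (p:ℂ)) (g (p₀:ℂ))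
              linarith
            have hcount := card_disj_balls tg (fun p => f ((p:ℂ) + (ℓ':ℂ)*Complex.I))
              hr₁pos hdisj hcenter
            have hMr : M*ℓ' = 32*C^4*r₁ := by
              rw [hMdef, hr₁def]
              field_simp
            have hRle : M*ℓ' + ρ + r₁ ≤ (32*C^4+2)*r₁ := by
              rw [hMr]
              linarith [hρr]
            have hR2 : (M*ℓ' + ρ + r₁)^2 ≤ ((32*C^4+2)*r₁)^2 := by
              have hnn : 0 ≤ M*ℓ' + ρ + r₁ := by positivity
              nlinarith
            have hfin : (tg.card:ℝ) * r₁^2 ≤ (32*C^4+2)^2 * r₁^2 := by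
              calc (tg.card:ℝ) * r₁^2 ≤ (M*ℓ' + ρ + r₁)^2 := hcount
                _ ≤ ((32*C^4+2)*r₁)^2 := hR2
                _ = (32*C^4+2)^2 * r₁^2 := by ring
            have hr₁2 : 0 < r₁^2 := by positivity
            exact le_of_mul_le_mul_right hfin hr₁2
        have hb1 : (tb1.card:ℝ) + tb2.card + tg.card ≤ N₀ := by
          rw [hN₀def]
          linarith
        have : (t.card:ℝ) ≤ (tb1.card:ℝ) + tb2.card + tg.card := by exact_mod_cast hsplit
        linarith
    have hcov : ∀ F : Set ℂ, ∃ B : ℕ → Set ℝ,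
        {x | x ∈ E ∧ g (x:ℂ) ∈ F} ⊆ (⋃ k, B k) ∧
        ∑' k, EMetric.diam (B k) ^ α ≤
          ENNReal.ofReal N₀ * ENNReal.ofReal (2*K₃/m') ^ α * EMetric.diam F ^ α := by
      intro F
      set A : Set ℝ := {x | x ∈ E ∧ g (x:ℂ) ∈ F} with hAdef
      by_cases hFtop : EMetric.diam F = ⊤
      · refine ⟨fun _ => univ, fun x _ => mem_iUnion.mpr ⟨0, mem_univ x⟩, ?_⟩
        have hne : ENNReal.ofReal N₀ * ENNReal.ofReal (2*K₃/m') ^ α ≠ 0 := by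
          apply mul_ne_zero
          · exact (ENNReal.ofReal_pos.mpr hN₀p).ne'
          · apply ne_of_gt
            apply ENNReal.rpow_pos
            · exact ENNReal.ofReal_pos.mpr (by positivity)
            · exact ENNReal.ofReal_ne_top
        rw [hFtop, ENNReal.top_rpow_of_pos hα0, ENNReal.mul_top hne]
        exact le_top
      · set ρ : ℝ := (EMetric.diam F).toReal with hρdef
        have hρ0 : 0 ≤ ρ := ENNReal.toReal_nonneg
        have hFdiam : ∀ y1 ∈ F, ∀ y2 ∈ F, dist y1 y2 ≤ ρ := by
          intro y1 h1 y2 h2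
          exact Metric.dist_le_diam_of_mem (Metric.isBounded_iff_ediam_ne_top.mpr hFtop) h1 h2
        rcases eq_or_lt_of_le hρ0 with hρz | hρpos
        · -- diameter zero : A is finite with at most N₀ points
          rw [← hρz] at hFdiam
          have hAfin : A.Finite := by
            by_contra hinf
            obtain ⟨t, htsub, htcard⟩ :=
              Set.Infinite.exists_subset_card_eq hinf (⌈N₀⌉₊ + 1)
            have ht2 : 2 ≤ t.card := by
              rw [htcard]
              have : 0 < ⌈N₀⌉₊ := Nat.ceil_pos.mpr hN₀p
              omega
            obtain ⟨a, ha, b, hb, hab⟩ := Finset.one_lt_card.mp (lt_of_lt_of_le one_lt_two ht2)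
            classical
            set Pd := (t ×ˢ t).filter (fun pq => pq.1 ≠ pq.2) with hPddef
            have hPdne : Pd.Nonempty := ⟨(a,b), by
              rw [hPddef, Finset.mem_filter, Finset.mem_product]
              exact ⟨⟨ha, hb⟩, hab⟩⟩
            set δ := Pd.inf' hPdne (fun pq => |pq.1 - pq.2|) with hδdef
            have hδpos : 0 < δ := by
              rw [hδdef, Finset.lt_inf'_iff]
              rintro ⟨p, q⟩ hpq
              rw [hPddef, Finset.mem_filter] at hpq
              exact abs_pos.mpr (sub_ne_zero.mpr hpq.2)
            have hδsep : ∀ p ∈ t, ∀ q ∈ t, p ≠ q → δ ≤ |p - q| := by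
              intro p hp q hq hne
              have hmem : (p, q) ∈ Pd := by
                rw [hPddef, Finset.mem_filter, Finset.mem_product]
                exact ⟨⟨hp, hq⟩, hne⟩
              rw [hδdef]
              exact Finset.inf'_le _ hmem
            have hcl := claim 0 δ le_rfl hδpos (by
                rw [mul_zero, zero_div]; exact hδpos.le) F hFdiam t
              (fun p hp => htsub hp) hδsep
            rw [htcard] at hcl
            have hceil := Nat.le_ceil N₀
            push_cast at hcl
            linarith
          set lst := hAfin.toFinset.toList with hlstdef
          refine ⟨fun k => if h : k < lst.length then {lst.get ⟨k, h⟩} else ∅, ?_, ?_⟩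
          · intro x hx
            have hxl : x ∈ lst := by
              rw [hlstdef, Finset.mem_toList, Set.Finite.mem_toFinset]
              exact hx
            obtain ⟨i, hi⟩ := List.mem_iff_get.mp hxl
            refine mem_iUnion.mpr ⟨i, ?_⟩
            rw [dif_pos i.isLt, hi]
            exact rfl
          · have hzero : ∀ k : ℕ, EMetric.diam
                (if h : k < lst.length then ({lst.get ⟨k, h⟩} : Set ℝ) else ∅) ^ α = 0 := by
              intro k
              by_cases h : k < lst.length
              · rw [dif_pos h]; simp [EMetric.diam, ENNReal.zero_rpow_of_pos hα0]
              · rw [dif_neg h]; simp [EMetric.diam, ENNReal.zero_rpow_of_pos hα0]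
            simp only [hzero, tsum_zero]
            exact zero_le
        · -- main case : positive diameter
          set ℓ : ℝ := K₃ * ρ / m' with hℓdef
          have hℓpos : 0 < ℓ := by rw [hℓdef]; positivity
          classical
          set P : ℕ → Prop := fun k => ∃ t : Finset ℝ, (∀ p ∈ t, p ∈ A) ∧
            (∀ p ∈ t, ∀ q ∈ t, p ≠ q → ℓ ≤ |p - q|) ∧ t.card = k with hPdef
          have hPb : ∀ k, P k → k ≤ ⌈N₀⌉₊ := by
            rintro k ⟨t, h1, h2, rfl⟩
            have := claim ρ ℓ hρ0 hℓpos le_rfl F hFdiam t h1 h2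
            have hceil := Nat.le_ceil N₀
            exact_mod_cast le_trans this hceil
          have hP0 : P 0 := ⟨∅, by simp, by simp, rfl⟩
          have hPk : P (Nat.findGreatest P ⌈N₀⌉₊) :=
            Nat.findGreatest_spec (Nat.zero_le _) hP0
          obtain ⟨t, htA, htsep, htcard⟩ := hPk
          have hmax : ∀ x ∈ A, ∃ p ∈ t, |x - p| < ℓ := by
            intro x hx
            by_contra hcon
            push_neg at hcon
            have hxt : x ∉ t := by
              intro hxt
              have := hcon x hxt
              simp only [sub_self, abs_zero] at this
              exact absurd this (not_le.mpr hℓpos)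
            have hP' : P (Nat.findGreatest P ⌈N₀⌉₊ + 1) := by
              refine ⟨insert x t, ?_, ?_, ?_⟩
              · intro p hp
                rcases Finset.mem_insert.mp hp with rfl | hp
                · exact hx
                · exact htA p hp
              · intro p hp q hq hne
                rcases Finset.mem_insert.mp hp with rfl | hp' <;>
                  rcases Finset.mem_insert.mp hq with rfl | hq'
                · exact absurd rfl hne
                · exact hcon q hq'
                · rw [abs_sub_comm]; exact hcon p hp'
                · exact htsep p hp' q hq' hne
              · rw [Finset.card_insert_of_notMem hxt, htcard]
            exact Nat.findGreatest_is_greatest (Nat.lt_succ_self _) (hPb _ hP') hP'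
          set lst := t.toList with hlstdef
          refine ⟨fun k => if h : k < lst.length then Metric.closedBall (lst.get ⟨k, h⟩) ℓ
            else ∅, ?_, ?_⟩
          · intro x hx
            obtain ⟨p, hp, hxp⟩ := hmax x hx
            have hpl : p ∈ lst := by rw [hlstdef, Finset.mem_toList]; exact hp
            obtain ⟨i, hi⟩ := List.mem_iff_get.mp hpl
            refine mem_iUnion.mpr ⟨i, ?_⟩
            rw [dif_pos i.isLt, hi]
            exact mem_closedBall.mpr (by rw [Real.dist_eq]; exact hxp.le)
          · have hterm : ∀ k : ℕ, EMetric.diam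
                (if h : k < lst.length then Metric.closedBall (lst.get ⟨k, h⟩) ℓ
                  else (∅ : Set ℝ)) ^ α ≤ ENNReal.ofReal (2*ℓ) ^ α := by
              intro k
              by_cases h : k < lst.length
              · rw [dif_pos h]
                refine ENNReal.rpow_le_rpow ?_ hα0.le
                rw [← Metric.emetric_closedBall (x := lst.get ⟨k, h⟩) hℓpos.le]
                refine le_trans EMetric.diam_closedBall ?_
                rw [ENNReal.ofReal_mul (by norm_num)]
                simp
              · rw [dif_neg h]; simp [EMetric.diam, ENNReal.zero_rpow_of_pos hα0]
            have hvanish : ∀ k ∉ Finset.range lst.length, EMetric.diam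
                (if h : k < lst.length then Metric.closedBall (lst.get ⟨k, h⟩) ℓ
                  else (∅ : Set ℝ)) ^ α = 0 := by
              intro k hk
              rw [dif_neg (by simpa using hk)]
              simp [EMetric.diam, ENNReal.zero_rpow_of_pos hα0]
            rw [tsum_eq_sum hvanish]
            refine le_trans (Finset.sum_le_card_nsmul _ _ (ENNReal.ofReal (2*ℓ) ^ α)
              (fun k _ => hterm k)) ?_
            rw [Finset.card_range, nsmul_eq_mul]
            calc (lst.length : ℝ≥0∞) * ENNReal.ofReal (2*ℓ) ^ α
                ≤ ENNReal.ofReal N₀ * ENNReal.ofReal (2*ℓ) ^ α := by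
                  refine mul_le_mul_left ?_ _
                  have hlen : lst.length = t.card := by
                    rw [hlstdef, Finset.length_toList]
                  have hcl := claim ρ ℓ hρ0 hℓpos le_rfl F hFdiam t htA htsep
                  rw [← ENNReal.ofReal_natCast]
                  apply ENNReal.ofReal_le_ofReal
                  rw [hlen]
                  exact hcl
              _ = ENNReal.ofReal N₀ * ENNReal.ofReal (2*K₃/m') ^ α * EMetric.diam F ^ α := by
                  have h2ℓ : 2*ℓ = (2*K₃/m') * ρ := by rw [hℓdef]; ring
                  rw [h2ℓ, ENNReal.ofReal_mul (by positivity),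
                    ENNReal.mul_rpow_of_nonneg _ _ hα0.le, ← mul_assoc,
                    hρdef, ENNReal.ofReal_toReal hFtop]
    -- assembly
    have h1le : ENNReal.ofReal ((N₀ * (64*C^3) ^ α)⁻¹ * m' ^ α) *
        (ENNReal.ofReal N₀ * ENNReal.ofReal (2*K₃/m') ^ α) ≤ 1 := by
      have h2K₃ : 2 * K₃ = 64 * C^3 := by rw [hK₃def]; ring
      have hq : 0 < 2*K₃/m' := by positivity
      rw [ENNReal.ofReal_rpow_of_pos hq, ← ENNReal.ofReal_mul (by positivity),
        ← ENNReal.ofReal_mul (by positivity)]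
      have heq : (N₀ * (64*C^3) ^ α)⁻¹ * m' ^ α * (N₀ * (2*K₃/m') ^ α) = 1 := by
        rw [h2K₃, Real.div_rpow (by positivity) hm'0]
        have hm'α : (0:ℝ) < m' ^ α := Real.rpow_pos_of_pos hm'pos α
        have h64 : (0:ℝ) < (64*C^3) ^ α := Real.rpow_pos_of_pos (by positivity) α
        field_simp
      rw [heq, ENNReal.ofReal_one]
    refine le_iInf fun F => le_iInf fun hFcov => ?_
    choose B hB1 hB2 using fun n => hcov (F n)
    set e : ℕ ≃ ℕ × ℕ := (Denumerable.eqv (ℕ × ℕ)).symm with hedef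
    set B' : ℕ → Set ℝ := fun j => B (e j).1 (e j).2 with hB'def
    have hEcov : E ⊆ ⋃ j, B' j := by
      intro x hx
      have hgx : g (x:ℂ) ∈ ⋃ n, F n :=
        hFcov (mem_image_of_mem g (mem_image_of_mem _ hx))
      obtain ⟨n, hn⟩ := mem_iUnion.mp hgx
      obtain ⟨k, hk⟩ := mem_iUnion.mp (hB1 n ⟨hx, hn⟩)
      refine mem_iUnion.mpr ⟨e.symm (n, k), ?_⟩
      rw [hB'def]
      simp only [Equiv.apply_symm_apply]
      exact hk
    have hEbound : hContent α E ≤ ∑' j, EMetric.diam (B' j) ^ α := by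
      rw [hContent]
      exact iInf₂_le B' hEcov
    have hsum : ∑' j, EMetric.diam (B' j) ^ α = ∑' n, ∑' k, EMetric.diam (B n k) ^ α := by
      rw [← ENNReal.tsum_prod (f := fun n k => EMetric.diam (B n k) ^ α)]
      exact e.tsum_eq (fun p => EMetric.diam (B p.1 p.2) ^ α)
    have hT : hContent α E ≤ (ENNReal.ofReal N₀ * ENNReal.ofReal (2*K₃/m') ^ α) *
        ∑' n, EMetric.diam (F n) ^ α := by
      rw [← ENNReal.tsum_mul_left]
      calc hContent α E ≤ ∑' j, EMetric.diam (B' j) ^ α := hEbound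
        _ = ∑' n, ∑' k, EMetric.diam (B n k) ^ α := hsum
        _ ≤ ∑' n, ENNReal.ofReal N₀ * ENNReal.ofReal (2*K₃/m') ^ α * EMetric.diam (F n) ^ α :=
            ENNReal.tsum_le_tsum fun n => hB2 n
    calc ENNReal.ofReal ((N₀ * (64*C^3) ^ α)⁻¹ * m' ^ α) * hContent α E
        ≤ ENNReal.ofReal ((N₀ * (64*C^3) ^ α)⁻¹ * m' ^ α) *
          ((ENNReal.ofReal N₀ * ENNReal.ofReal (2*K₃/m') ^ α) *
            ∑' n, EMetric.diam (F n) ^ α) := mul_le_mul_right hT _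
      _ = (ENNReal.ofReal ((N₀ * (64*C^3) ^ α)⁻¹ * m' ^ α) *
          (ENNReal.ofReal N₀ * ENNReal.ofReal (2*K₃/m') ^ α)) *
            ∑' n, EMetric.diam (F n) ^ α := by ring
      _ ≤ 1 * ∑' n, EMetric.diam (F n) ^ α := mul_le_mul_left h1le _
      _ = ∑' n, EMetric.diam (F n) ^ α := one_mul _
end
end

section
/- Let u be a harmonic function in the upper half plane ℍ with sup_{z ∈ ℍ} Im(z) |∇u(z)| ≤ A, let E ⊂ ℝ be nonempty, let c ∈ ℝ, y₀ > 0 and K ≥ 0, and suppose that |u(x + iy) − c| ≤ K for every x ∈ E and every 0 < y ≤ y₀. Then for every point w = x + iy ∈ ℍ with dist(x, E) ≤ y ≤ y₀ one has |u(w) − c| ≤ K + A. -/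
open Set Metric MeasureTheory Filter Topology
open scoped ENNReal NNReal

noncomputable section

/-- bounds on a harmonic Bloch-type function over vertical segments based
on `E` propagate to the whole sawtooth region over `E`, with error `A`. -/
theorem sawtooth_bound_propagation (u : ℂ → ℝ) (A : ℝ) (hh : HarmonicOnH u)
    (hb : ∀ z ∈ UHP, z.im * ‖fderiv ℝ u z‖ ≤ A)
    (E : Set ℝ) (hE : E.Nonempty) (c y₀ K : ℝ) (hy₀ : 0 < y₀) (hK : 0 ≤ K)
    (hseg : ∀ x ∈ E, ∀ y : ℝ, 0 < y → y ≤ y₀ → |u ((x : ℂ) + y * Complex.I) - c| ≤ K) :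
    ∀ x y : ℝ, 0 < y → y ≤ y₀ → infDist x E ≤ y →
      |u ((x : ℂ) + y * Complex.I) - c| ≤ K + A := by
  intro x y hy hyy₀ hdist
  have hUHPopen : IsOpen UHP := isOpen_lt continuous_const Complex.continuous_im
  have hA : 0 ≤ A := by
    have h1 : Complex.I ∈ UHP := by simp [UHP]
    have := hb Complex.I h1
    have h2 : (0:ℝ) ≤ ‖fderiv ℝ u Complex.I‖ := norm_nonneg _
    simpa [Complex.I_im] using le_trans h2 (by simpa [Complex.I_im] using this)
  refine le_of_forall_pos_le_add fun ε hε => ?_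
  set δ := ε * y / (A + 1) with hδdef
  have hδ : 0 < δ := by positivity
  have hlt : infDist x E < y + δ := lt_of_le_of_lt hdist (by linarith)
  obtain ⟨x', hx'E, hxx'⟩ := (infDist_lt_iff hE).mp hlt
  set w : ℂ := (x:ℂ) + y * Complex.I with hw
  set w' : ℂ := (x':ℂ) + y * Complex.I with hw'
  have hwim : w.im = y := by simp [hw]
  have hw'im : w'.im = y := by simp [hw']
  have him : ∀ z ∈ segment ℝ w' w, z.im = y := by
    rintro z ⟨a, b, ha, hb', hab, rfl⟩
    simp only [Complex.add_im, Complex.smul_im, hwim, hw'im, smul_eq_mul]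
    nlinarith
  have hC : ∀ z ∈ segment ℝ w' w, ‖fderiv ℝ u z‖ ≤ A / y := by
    intro z hz
    have hzim := him z hz
    have hzU : z ∈ UHP := by simp only [UHP, Set.mem_setOf_eq, hzim]; exact hy
    have hbz := hb z hzU
    rw [hzim] at hbz
    rw [le_div_iff₀ hy]
    linarith [mul_comm y ‖fderiv ℝ u z‖]
  have hdiff : ∀ z ∈ segment ℝ w' w, DifferentiableAt ℝ u z := by
    intro z hz
    have hzU : z ∈ UHP := by
      simp only [UHP, Set.mem_setOf_eq, him z hz]; exact hy
    exact (hh.1.contDiffAt (hUHPopen.mem_nhds hzU)).differentiableAt two_ne_zero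
  have hmvt := Convex.norm_image_sub_le_of_norm_fderiv_le hdiff hC
    (convex_segment w' w) (left_mem_segment ℝ w' w) (right_mem_segment ℝ w' w)
  have hww' : w - w' = ((x - x' : ℝ) : ℂ) := by
    simp only [hw, hw']; push_cast; ring
  have hnorm : ‖w - w'‖ = dist x x' := by
    rw [hww', Complex.norm_real, Real.norm_eq_abs, Real.dist_eq]
  have hbound : ‖u w - u w'‖ ≤ A / y * (y + δ) := by
    refine le_trans hmvt ?_
    rw [hnorm]
    exact mul_le_mul_of_nonneg_left (le_of_lt hxx') (by positivity)
  have hAδ : A / y * (y + δ) ≤ A + ε := by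
    rw [mul_add, div_mul_cancel₀ _ (ne_of_gt hy)]
    have : A / y * δ ≤ ε := by
      rw [hδdef]
      have h1 : A / y * (ε * y / (A + 1)) = ε * A / (A + 1) := by field_simp
      rw [h1, div_le_iff₀ (by positivity)]
      nlinarith
    linarith
  have hseg' : |u w' - c| ≤ K := hseg x' hx'E y hy hyy₀
  have : |u w - c| ≤ |u w - u w'| + |u w' - c| := by
    have := abs_sub_le (u w) (u w') c
    linarith
  calc |u w - c| ≤ |u w - u w'| + |u w' - c| := this
    _ ≤ (A + ε) + K := by
        refine add_le_add ?_ hseg'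
        calc |u w - u w'| = ‖u w - u w'‖ := (Real.norm_eq_abs _).symm
          _ ≤ A / y * (y + δ) := hbound
          _ ≤ A + ε := hAδ
    _ = K + A + ε := by ring
end
end
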